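/- arXiv:1708.01780 — 4 statements merged into one kernel-verified Lean document; each statement's English description precedes it below -/
import Mathlib

section
/- Let R be a commutative unital ring, E a graph, v_0 ∈ E^0 a vertex, and n a positive integer. Then L_R(E(v_0, n)) ≅ L_R(E'(v_0, n)), where E(v_0, n) is E with a 'head' of n new vertices v_1,…,v_n and n new edges e_i from v_i to v_{i−1} attached at v_0, and E'(v_0, n) is E with n new vertices v_1,…,v_n and n new edges e_i each going from v_i directly to v_0. -/
noncomputable section

structure DGraph : Type 1 where
  V : Type
  E : Type
  s : E → V
  r : E → V

namespace DGraph

variable (R : Type) [CommRing R]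

inductive Gen (G : DGraph) : Type
  | vert : G.V → Gen G
  | edge : G.E → Gen G
  | ghost : G.E → Gen G

abbrev FA (G : DGraph) := FreeAlgebra R (Gen G)

def gv (G : DGraph) (v : G.V) : FA R G := FreeAlgebra.ι R (Gen.vert v)
def ge (G : DGraph) (e : G.E) : FA R G := FreeAlgebra.ι R (Gen.edge e)
def gg (G : DGraph) (e : G.E) : FA R G := FreeAlgebra.ι R (Gen.ghost e)

/-- A vertex is regular if it emits a finite nonzero number of edges. -/
def IsRegular (G : DGraph) (v : G.V) : Prop :=
  {e : G.E | G.s e = v}.Finite ∧ {e : G.E | G.s e = v}.Nonempty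

open Classical in
/-- The Leavitt path algebra relations. -/
inductive LRel (G : DGraph) : FA R G → FA R G → Prop
  | vmul (u v : G.V) : LRel G (gv R G u * gv R G v) (if u = v then gv R G u else 0)
  | se (e : G.E) : LRel G (gv R G (G.s e) * ge R G e) (ge R G e)
  | er (e : G.E) : LRel G (ge R G e * gv R G (G.r e)) (ge R G e)
  | rg (e : G.E) : LRel G (gv R G (G.r e) * gg R G e) (gg R G e)
  | gs (e : G.E) : LRel G (gg R G e * gv R G (G.s e)) (gg R G e)
  | ck1 (e f : G.E) : LRel G (gg R G e * ge R G f) (if e = f then gv R G (G.r e) else 0)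
  | ck2 (v : G.V) (h : IsRegular G v) :
      LRel G (h.1.toFinset.sum fun e => ge R G e * gg R G e) (gv R G v)

/-- The Leavitt path algebra of the graph `G` over `R`. -/
abbrev LPA (G : DGraph) : Type := RingQuot (LRel R G)

def Vq (G : DGraph) (v : G.V) : LPA R G := RingQuot.mkAlgHom R (LRel R G) (gv R G v)
def Eq' (G : DGraph) (e : G.E) : LPA R G := RingQuot.mkAlgHom R (LRel R G) (ge R G e)
def Gq (G : DGraph) (e : G.E) : LPA R G := RingQuot.mkAlgHom R (LRel R G) (gg R G e)

def Step (G : DGraph) (v w : G.V) : Prop := ∃ e : G.E, G.s e = v ∧ G.r e = w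
def Reaches (G : DGraph) : G.V → G.V → Prop := Relation.ReflTransGen (Step G)
def Hereditary (G : DGraph) (H : Set G.V) : Prop := ∀ v ∈ H, ∀ w, Reaches G v w → w ∈ H
def HClosure (G : DGraph) (X : Set G.V) : Set G.V := {w | ∃ v ∈ X, Reaches G v w}

def NoSinks (G : DGraph) : Prop := ∀ v : G.V, ∃ e, G.s e = v
def NoSources (G : DGraph) : Prop := ∀ v : G.V, ∃ e, G.r e = v
def FiniteGraph (G : DGraph) : Prop := Finite G.V ∧ Finite G.E

/-- `A` is (isomorphic to) an algebraic Cuntz–Krieger `R`-algebra. -/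
def IsCKAlgebra (A : Type) [Ring A] [Algebra R A] : Prop :=
  ∃ G : DGraph, FiniteGraph G ∧ NoSinks G ∧ NoSources G ∧ Nonempty (LPA R G ≃ₐ[R] A)

end DGraph

open DGraph

/-- `E(v₀,n)`: attach a head `vₙ → ⋯ → v₁ → v₀` at `v₀` (index `i : Fin n` is `v_{i+1}`,
edge `i` is `e_{i+1} : v_{i+1} → v_i`). -/
def attachHead (G : DGraph) (v0 : G.V) (n : ℕ) : DGraph where
  V := G.V ⊕ Fin n
  E := G.E ⊕ Fin n
  s := Sum.elim (fun e => Sum.inl (G.s e)) (fun i => Sum.inr i)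
  r := Sum.elim (fun e => Sum.inl (G.r e)) (fun i =>
    if _ : (i : ℕ) = 0 then Sum.inl v0
    else Sum.inr ⟨(i : ℕ) - 1, Nat.lt_of_le_of_lt (Nat.sub_le _ _) i.isLt⟩)

/-- `E'(v₀,n)`: attach `n` new vertices `v₁,…,vₙ` each with an edge `eᵢ : vᵢ → v₀`. -/
def attachFan (G : DGraph) (v0 : G.V) (n : ℕ) : DGraph where
  V := G.V ⊕ Fin n
  E := G.E ⊕ Fin n
  s := Sum.elim (fun e => Sum.inl (G.s e)) (fun i => Sum.inr i)
  r := Sum.elim (fun e => Sum.inl (G.r e)) (fun _ => Sum.inl v0)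
section GenericLemmas
open Classical

variable (R : Type) [CommRing R] (G : DGraph)

open DGraph in
lemma Vq_mul (u v : G.V) :
    Vq R G u * Vq R G v = if u = v then Vq R G u else 0 := by
  have h := RingQuot.mkAlgHom_rel R (LRel.vmul (R := R) (G := G) u v)
  rw [map_mul, apply_ite (RingQuot.mkAlgHom R (LRel R G)), map_zero] at h
  exact h

open DGraph in
lemma se' (e : G.E) : Vq R G (G.s e) * Eq' R G e = Eq' R G e := by
  have h := RingQuot.mkAlgHom_rel R (LRel.se (R := R) (G := G) e)
  rw [map_mul] at h; exact h

open DGraph in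
lemma er' (e : G.E) : Eq' R G e * Vq R G (G.r e) = Eq' R G e := by
  have h := RingQuot.mkAlgHom_rel R (LRel.er (R := R) (G := G) e)
  rw [map_mul] at h; exact h

open DGraph in
lemma rg' (e : G.E) : Vq R G (G.r e) * Gq R G e = Gq R G e := by
  have h := RingQuot.mkAlgHom_rel R (LRel.rg (R := R) (G := G) e)
  rw [map_mul] at h; exact h

open DGraph in
lemma gs' (e : G.E) : Gq R G e * Vq R G (G.s e) = Gq R G e := by
  have h := RingQuot.mkAlgHom_rel R (LRel.gs (R := R) (G := G) e)
  rw [map_mul] at h; exact h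

open DGraph in
lemma ck1' (e f : G.E) :
    Gq R G e * Eq' R G f = if e = f then Vq R G (G.r e) else 0 := by
  have h := RingQuot.mkAlgHom_rel R (LRel.ck1 (R := R) (G := G) e f)
  rw [map_mul, apply_ite (RingQuot.mkAlgHom R (LRel R G)), map_zero] at h
  exact h

open DGraph in
lemma ck2' (v : G.V) (h : IsRegular G v) :
    (h.1.toFinset.sum fun e => Eq' R G e * Gq R G e) = Vq R G v := by
  have h2 := RingQuot.mkAlgHom_rel R (LRel.ck2 (R := R) (G := G) v h)
  rw [map_sum] at h2
  simpa only [map_mul, Eq', Gq, Vq] using h2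

open DGraph in
lemma ck2_single (v : G.V) (f : G.E) (hf : {e | G.s e = v} = {f}) :
    Eq' R G f * Gq R G f = Vq R G v := by
  have hreg : IsRegular G v :=
    ⟨by rw [hf]; exact Set.finite_singleton f, by rw [hf]; exact Set.singleton_nonempty f⟩
  have hfin : hreg.1.toFinset = {f} := by
    ext e; simp [Set.Finite.mem_toFinset, hf]
  have h := ck2' R G v hreg
  rwa [hfin, Finset.sum_singleton] at h

end GenericLemmas
section Specific

open DGraph Classical

variable (R : Type) [CommRing R] (G : DGraph) (v0 : G.V) (n : ℕ)

local notation "HH" => attachHead G v0 n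
local notation "FF" => attachFan G v0 n

lemma head_r_zero (h : 0 < n) :
    (HH).r (Sum.inr ⟨0, h⟩) = Sum.inl v0 := by simp [attachHead]

lemma head_r_succ (k : ℕ) (h : k + 1 < n) :
    (HH).r (Sum.inr ⟨k + 1, h⟩) = Sum.inr ⟨k, Nat.lt_of_succ_lt h⟩ := by
  simp [attachHead]

lemma head_src_inr (i : Fin n) :
    {e : (HH).E | (HH).s e = Sum.inr i} = {Sum.inr i} := by
  ext e
  cases e with
  | inl e => erw [Set.mem_setOf_eq, Set.mem_singleton_iff]; simp [attachHead]
  | inr j => erw [Set.mem_setOf_eq, Set.mem_singleton_iff]; simp [attachHead]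

lemma fan_src_inr (i : Fin n) :
    {e : (FF).E | (FF).s e = Sum.inr i} = {Sum.inr i} := by
  ext e
  cases e with
  | inl e => erw [Set.mem_setOf_eq, Set.mem_singleton_iff]; simp [attachFan]
  | inr j => erw [Set.mem_setOf_eq, Set.mem_singleton_iff]; simp [attachFan]

/-- single edge in `HH`, junk value `1` if out of range. -/
def emh (k : ℕ) : LPA R (HH) :=
  if h : k < n then Eq' R (HH) (Sum.inr ⟨k, h⟩) else 1

/-- single ghost edge in `HH`. -/
def gm (k : ℕ) : LPA R (HH) :=
  if h : k < n then Gq R (HH) (Sum.inr ⟨k, h⟩) else 1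

/-- the path `e_k e_{k-1} ⋯ e_0` in `HH`. -/
def P : ℕ → LPA R (HH)
  | 0 => emh R G v0 n 0
  | (k+1) => emh R G v0 n (k+1) * P k

/-- the ghost path `g_0 g_1 ⋯ g_k` in `HH`. -/
def Q : ℕ → LPA R (HH)
  | 0 => gm R G v0 n 0
  | (k+1) => Q k * gm R G v0 n (k+1)

lemma emh_eq (k : ℕ) (h : k < n) : emh R G v0 n k = Eq' R (HH) (Sum.inr ⟨k, h⟩) := dif_pos h
lemma gm_eq (k : ℕ) (h : k < n) : gm R G v0 n k = Gq R (HH) (Sum.inr ⟨k, h⟩) := dif_pos h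

lemma P_mul_v0 : ∀ k, k < n → P R G v0 n k * Vq R (HH) (Sum.inl v0) = P R G v0 n k
  | 0, h => by
    rw [P, emh_eq R G v0 n 0 h, ← head_r_zero G v0 n h]
    exact er' R (HH) _
  | (k+1), h => by
    rw [P, mul_assoc, P_mul_v0 k (Nat.lt_of_succ_lt h)]

lemma v0_mul_Q : ∀ k, k < n → Vq R (HH) (Sum.inl v0) * Q R G v0 n k = Q R G v0 n k
  | 0, h => by
    rw [Q, gm_eq R G v0 n 0 h, ← head_r_zero G v0 n h]
    exact rg' R (HH) _
  | (k+1), h => by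
    rw [Q, ← mul_assoc, v0_mul_Q k (Nat.lt_of_succ_lt h)]

lemma Q_mul_vk (k : ℕ) (h : k < n) :
    Q R G v0 n k * Vq R (HH) (Sum.inr ⟨k, h⟩) = Q R G v0 n k := by
  cases k with
  | zero =>
    rw [Q, gm_eq R G v0 n 0 h]
    exact gs' R (HH) (Sum.inr ⟨0, h⟩)
  | succ k =>
    rw [Q, gm_eq R G v0 n (k+1) h, mul_assoc,
      show Vq R (HH) (Sum.inr ⟨k+1, h⟩) = Vq R (HH) ((HH).s (Sum.inr ⟨k+1, h⟩)) from rfl,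
      gs' R (HH) (Sum.inr ⟨k+1, h⟩)]

lemma vk_mul_P (k : ℕ) (h : k < n) :
    Vq R (HH) (Sum.inr ⟨k, h⟩) * P R G v0 n k = P R G v0 n k := by
  cases k with
  | zero =>
    rw [P, emh_eq R G v0 n 0 h]
    exact se' R (HH) (Sum.inr ⟨0, h⟩)
  | succ k =>
    rw [P, emh_eq R G v0 n (k+1) h, ← mul_assoc,
      show Vq R (HH) (Sum.inr ⟨k+1, h⟩) = Vq R (HH) ((HH).s (Sum.inr ⟨k+1, h⟩)) from rfl,
      se' R (HH) (Sum.inr ⟨k+1, h⟩)]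

lemma QP : ∀ k, k < n → Q R G v0 n k * P R G v0 n k = Vq R (HH) (Sum.inl v0)
  | 0, h => by
    erw [Q, P, emh_eq R G v0 n 0 h, gm_eq R G v0 n 0 h, ck1', if_pos rfl, head_r_zero G v0 n h]
  | (k+1), h => by
    have hk := Nat.lt_of_succ_lt h
    rw [Q, P, emh_eq R G v0 n (k+1) h, gm_eq R G v0 n (k+1) h]
    erw [mul_assoc, ← mul_assoc (Gq R (HH) _), ck1', if_pos rfl, head_r_succ G v0 n k h,
      ← mul_assoc, Q_mul_vk R G v0 n k hk, QP k hk]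

lemma PQ : ∀ (k : ℕ) (h : k < n), P R G v0 n k * Q R G v0 n k = Vq R (HH) (Sum.inr ⟨k, h⟩)
  | 0, h => by
    rw [P, Q, emh_eq R G v0 n 0 h, gm_eq R G v0 n 0 h]
    exact ck2_single R (HH) _ _ (head_src_inr G v0 n ⟨0, h⟩)
  | (k+1), h => by
    have hk := Nat.lt_of_succ_lt h
    rw [P, Q, emh_eq R G v0 n (k+1) h, gm_eq R G v0 n (k+1) h]
    rw [mul_assoc, ← mul_assoc (P R G v0 n k), PQ k hk, ← head_r_succ G v0 n k h,
      rg' R (HH) (Sum.inr ⟨k+1, h⟩)]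
    exact ck2_single R (HH) _ _ (head_src_inr G v0 n ⟨k+1, h⟩)

lemma QP_ne (i j : ℕ) (hi : i < n) (hj : j < n) (hne : i ≠ j) :
    Q R G v0 n i * P R G v0 n j = 0 := by
  have key : ∀ a b (ha : a < n) (hb : b < n), a ≠ b →
      Gq R (HH) (Sum.inr ⟨a, ha⟩) * Eq' R (HH) (Sum.inr ⟨b, hb⟩) = 0 := by
    intro a b ha hb hab
    erw [ck1', if_neg]
    intro hcon
    exact hab (congrArg Fin.val (Sum.inr.inj hcon))
  cases i with
  | zero =>
    cases j with
    | zero => exact absurd rfl hne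
    | succ j =>
      rw [Q, P, gm_eq R G v0 n 0 hi, emh_eq R G v0 n (j+1) hj, ← mul_assoc,
        key 0 (j+1) hi hj (by omega), zero_mul]
  | succ i =>
    cases j with
    | zero =>
      rw [Q, P, gm_eq R G v0 n (i+1) hi, emh_eq R G v0 n 0 hj, mul_assoc,
        key (i+1) 0 hi hj (by omega), mul_zero]
    | succ j =>
      erw [Q, P, gm_eq R G v0 n (i+1) hi, emh_eq R G v0 n (j+1) hj, mul_assoc,
        ← mul_assoc (Gq R (HH) _), key (i+1) (j+1) hi hj (by omega), zero_mul, mul_zero]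

lemma Gl_mul_P (e : G.E) (k : ℕ) (hk : k < n) :
    Gq R (HH) (Sum.inl e) * P R G v0 n k = 0 := by
  have key : ∀ b (hb : b < n),
      Gq R (HH) (Sum.inl e) * Eq' R (HH) (Sum.inr ⟨b, hb⟩) = 0 := by
    intro b hb
    erw [ck1', if_neg (fun hcon => Sum.inl_ne_inr hcon)]
  cases k with
  | zero => rw [P, emh_eq R G v0 n 0 hk]; exact key 0 hk
  | succ k => rw [P, emh_eq R G v0 n (k+1) hk, ← mul_assoc, key (k+1) hk, zero_mul]

lemma Q_mul_El (k : ℕ) (hk : k < n) (f : G.E) :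
    Q R G v0 n k * Eq' R (HH) (Sum.inl f) = 0 := by
  have key : ∀ a (ha : a < n),
      Gq R (HH) (Sum.inr ⟨a, ha⟩) * Eq' R (HH) (Sum.inl f) = 0 := by
    intro a ha
    erw [ck1', if_neg (fun hcon => Sum.inr_ne_inl hcon)]
  cases k with
  | zero => rw [Q, gm_eq R G v0 n 0 hk]; exact key 0 hk
  | succ k => rw [Q, gm_eq R G v0 n (k+1) hk, mul_assoc, key (k+1) hk, mul_zero]

end Specific
section Phi

open DGraph Classical

variable (R : Type) [CommRing R] (G : DGraph) (v0 : G.V) (n : ℕ)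

local notation "HH" => attachHead G v0 n
local notation "FF" => attachFan G v0 n

lemma fan_GE (j k : Fin n) :
    Gq R (FF) (Sum.inr j) * Eq' R (FF) (Sum.inr k) =
      if j = k then Vq R (FF) (Sum.inl v0) else 0 := by
  rw [ck1' R (FF) (Sum.inr j) (Sum.inr k)]
  by_cases h : j = k
  · subst h; erw [if_pos rfl, if_pos rfl]; rfl
  · erw [if_neg (fun hc => h (Sum.inr.inj hc)), if_neg h]

lemma fan_GE_mix1 (e : G.E) (k : Fin n) :
    Gq R (FF) (Sum.inl e) * Eq' R (FF) (Sum.inr k) = 0 := by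
  erw [ck1', if_neg (fun hc => Sum.inl_ne_inr hc)]

lemma fan_GE_mix2 (j : Fin n) (f : G.E) :
    Gq R (FF) (Sum.inr j) * Eq' R (FF) (Sum.inl f) = 0 := by
  erw [ck1', if_neg (fun hc => Sum.inr_ne_inl hc)]

lemma fan_E_mul_v0 (j : Fin n) :
    Eq' R (FF) (Sum.inr j) * Vq R (FF) (Sum.inl v0) = Eq' R (FF) (Sum.inr j) :=
  er' R (FF) (Sum.inr j)

lemma fan_v0_mul_G (j : Fin n) :
    Vq R (FF) (Sum.inl v0) * Gq R (FF) (Sum.inr j) = Gq R (FF) (Sum.inr j) :=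
  rg' R (FF) (Sum.inr j)

lemma fan_V_mul_E (j : Fin n) :
    Vq R (FF) (Sum.inr j) * Eq' R (FF) (Sum.inr j) = Eq' R (FF) (Sum.inr j) :=
  se' R (FF) (Sum.inr j)

lemma fan_G_mul_V (j : Fin n) :
    Gq R (FF) (Sum.inr j) * Vq R (FF) (Sum.inr j) = Gq R (FF) (Sum.inr j) :=
  gs' R (FF) (Sum.inr j)

lemma fan_EG (j : Fin n) :
    Eq' R (FF) (Sum.inr j) * Gq R (FF) (Sum.inr j) = Vq R (FF) (Sum.inr j) :=
  ck2_single R (FF) _ _ (fan_src_inr G v0 n j)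

/-- predecessor index -/
def prd (i : Fin n) : Fin n := ⟨(i : ℕ) - 1, Nat.lt_of_le_of_lt (Nat.sub_le _ _) i.isLt⟩

def phiGen : Gen (HH) → LPA R (FF)
  | .vert v => Vq R (FF) v
  | .edge (Sum.inl e) => Eq' R (FF) (Sum.inl e)
  | .ghost (Sum.inl e) => Gq R (FF) (Sum.inl e)
  | .edge (Sum.inr i) =>
      if _ : (i : ℕ) = 0 then Eq' R (FF) (Sum.inr i)
      else Eq' R (FF) (Sum.inr i) * Gq R (FF) (Sum.inr (prd n i))
  | .ghost (Sum.inr i) =>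
      if _ : (i : ℕ) = 0 then Gq R (FF) (Sum.inr i)
      else Eq' R (FF) (Sum.inr (prd n i)) * Gq R (FF) (Sum.inr i)

def phi0 : FA R (HH) →ₐ[R] LPA R (FF) := FreeAlgebra.lift R (phiGen R G v0 n)

lemma phi0_rel : ∀ x y, LRel R (HH) x y → phi0 R G v0 n x = phi0 R G v0 n y := by
  intro x y hrel
  induction hrel with
  | vmul u v =>
    simp only [phi0, gv, map_mul, apply_ite (FreeAlgebra.lift R (phiGen R G v0 n)), map_zero,
      FreeAlgebra.lift_ι_apply, phiGen]
    exact Vq_mul R (FF) u v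
  | se e =>
    simp only [phi0, gv, ge, map_mul, FreeAlgebra.lift_ι_apply]
    cases e with
    | inl e =>
      simp only [phiGen]
      exact se' R (FF) (Sum.inl e)
    | inr i =>
      simp only [phiGen]
      by_cases hi : (i : ℕ) = 0
      · rw [dif_pos hi]
        exact fan_V_mul_E R G v0 n i
      · rw [dif_neg hi, ← mul_assoc]
        rw [show ((HH).s (Sum.inr i) : (FF).V) = Sum.inr i from rfl, fan_V_mul_E]
  | er e =>
    simp only [phi0, gv, ge, map_mul, FreeAlgebra.lift_ι_apply]
    cases e with
    | inl e =>
      simp only [phiGen]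
      exact er' R (FF) (Sum.inl e)
    | inr i =>
      simp only [phiGen]
      by_cases hi : (i : ℕ) = 0
      · rw [dif_pos hi]
        rw [show ((HH).r (Sum.inr i) : (FF).V) = Sum.inl v0 from by
          simp [attachHead, hi]]
        exact fan_E_mul_v0 R G v0 n i
      · rw [dif_neg hi]
        rw [show ((HH).r (Sum.inr i) : (FF).V) = Sum.inr (prd n i) from by
          simp [attachHead, hi, prd]]
        rw [mul_assoc, fan_G_mul_V]
  | rg e =>
    simp only [phi0, gv, gg, map_mul, FreeAlgebra.lift_ι_apply]
    cases e with
    | inl e =>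
      simp only [phiGen]
      exact rg' R (FF) (Sum.inl e)
    | inr i =>
      simp only [phiGen]
      by_cases hi : (i : ℕ) = 0
      · rw [dif_pos hi]
        rw [show ((HH).r (Sum.inr i) : (FF).V) = Sum.inl v0 from by
          simp [attachHead, hi]]
        exact fan_v0_mul_G R G v0 n i
      · rw [dif_neg hi]
        rw [show ((HH).r (Sum.inr i) : (FF).V) = Sum.inr (prd n i) from by
          simp [attachHead, hi, prd]]
        rw [← mul_assoc, fan_V_mul_E]
  | gs e =>
    simp only [phi0, gv, gg, map_mul, FreeAlgebra.lift_ι_apply]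
    cases e with
    | inl e =>
      simp only [phiGen]
      exact gs' R (FF) (Sum.inl e)
    | inr i =>
      simp only [phiGen]
      by_cases hi : (i : ℕ) = 0
      · rw [dif_pos hi]
        exact fan_G_mul_V R G v0 n i
      · rw [dif_neg hi, mul_assoc]
        rw [show ((HH).s (Sum.inr i) : (FF).V) = Sum.inr i from rfl, fan_G_mul_V]
  | ck1 e f =>
    simp only [phi0, gv, ge, gg, map_mul, apply_ite (FreeAlgebra.lift R (phiGen R G v0 n)),
      map_zero, FreeAlgebra.lift_ι_apply]
    cases e with
    | inl e =>
      cases f with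
      | inl f =>
        simp only [phiGen]
        rw [ck1' R (FF) (Sum.inl e) (Sum.inl f)]
        by_cases h : e = f
        · subst h; erw [if_pos rfl]
        · erw [if_neg (fun hc => h (Sum.inl.inj hc))]
      | inr j =>
        simp only [phiGen]
        erw [if_neg (fun hc => Sum.inl_ne_inr hc)]
        by_cases hj : (j : ℕ) = 0
        · rw [dif_pos hj, fan_GE_mix1]
        · rw [dif_neg hj, ← mul_assoc, fan_GE_mix1, zero_mul]
    | inr i =>
      cases f with
      | inl f =>
        simp only [phiGen]
        erw [if_neg (fun hc => Sum.inr_ne_inl hc)]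
        by_cases hi : (i : ℕ) = 0
        · rw [dif_pos hi, fan_GE_mix2]
        · rw [dif_neg hi, mul_assoc, fan_GE_mix2, mul_zero]
      | inr j =>
        simp only [phiGen]
        by_cases h : i = j
        · subst h
          erw [if_pos rfl]
          by_cases hi : (i : ℕ) = 0
          · rw [dif_pos hi, dif_pos hi, fan_GE, if_pos rfl]
            rw [show ((HH).r (Sum.inr i) : (FF).V) = Sum.inl v0 from by
              simp [attachHead, hi]]
          · rw [dif_neg hi, dif_neg hi]
            rw [show ((HH).r (Sum.inr i) : (FF).V) = Sum.inr (prd n i) from by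
              simp [attachHead, hi, prd]]
            rw [mul_assoc, ← mul_assoc (Gq R (FF) (Sum.inr i)), fan_GE, if_pos rfl,
              ← mul_assoc, fan_E_mul_v0, fan_EG]
        · erw [if_neg (fun hc => h (Sum.inr.inj hc))]
          by_cases hi : (i : ℕ) = 0
          · by_cases hj : (j : ℕ) = 0
            · exact absurd (Fin.ext (hi.trans hj.symm)) h
            · rw [dif_pos hi, dif_neg hj, ← mul_assoc, fan_GE,
                if_neg h, zero_mul]
          · by_cases hj : (j : ℕ) = 0
            · rw [dif_neg hi, dif_pos hj, mul_assoc, fan_GE,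
                if_neg (fun hc => h hc), mul_zero]
            · rw [dif_neg hi, dif_neg hj, mul_assoc,
                ← mul_assoc (Gq R (FF) (Sum.inr i)), fan_GE, if_neg h, zero_mul, mul_zero]
  | ck2 v hreg =>
    rw [map_sum]
    simp only [map_mul, ge, gg, gv, phi0, FreeAlgebra.lift_ι_apply]
    cases v with
    | inl u =>
      have hFr : IsRegular (FF) (Sum.inl u) := hreg
      simp only [phiGen]
      rw [← ck2' R (FF) (Sum.inl u) hFr]
      apply Finset.sum_congr rfl
      intro e he
      rw [Set.Finite.mem_toFinset] at he
      cases e with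
      | inl e => simp only [phiGen]
      | inr i => exact absurd he (fun hc => Sum.inr_ne_inl hc)
    | inr i =>
      have hfin : hreg.1.toFinset = {Sum.inr i} := by
        ext e
        cases e with
        | inl e => erw [Set.Finite.mem_toFinset, Set.mem_setOf_eq, Finset.mem_singleton]; simp [attachHead]
        | inr j => erw [Set.Finite.mem_toFinset, Set.mem_setOf_eq, Finset.mem_singleton]; simp [attachHead]
      erw [hfin, Finset.sum_singleton]
      simp only [phiGen]
      by_cases hi : (i : ℕ) = 0
      · rw [dif_pos hi, dif_pos hi, fan_EG]
      · rw [dif_neg hi, dif_neg hi, mul_assoc,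
          ← mul_assoc (Gq R (FF) (Sum.inr (prd n i))), fan_GE, if_pos rfl,
          ← mul_assoc, fan_E_mul_v0, fan_EG]

end Phi
section Psi

open DGraph Classical

variable (R : Type) [CommRing R] (G : DGraph) (v0 : G.V) (n : ℕ)

local notation "HH" => attachHead G v0 n
local notation "FF" => attachFan G v0 n

def psiGen : Gen (FF) → LPA R (HH)
  | .vert v => Vq R (HH) v
  | .edge (Sum.inl e) => Eq' R (HH) (Sum.inl e)
  | .ghost (Sum.inl e) => Gq R (HH) (Sum.inl e)
  | .edge (Sum.inr i) => P R G v0 n (i : ℕ)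
  | .ghost (Sum.inr i) => Q R G v0 n (i : ℕ)

def psi0 : FA R (FF) →ₐ[R] LPA R (HH) := FreeAlgebra.lift R (psiGen R G v0 n)

lemma psi0_rel : ∀ x y, LRel R (FF) x y → psi0 R G v0 n x = psi0 R G v0 n y := by
  intro x y hrel
  induction hrel with
  | vmul u v =>
    simp only [psi0, gv, map_mul, apply_ite (FreeAlgebra.lift R (psiGen R G v0 n)), map_zero,
      FreeAlgebra.lift_ι_apply, psiGen]
    exact Vq_mul R (HH) u v
  | se e =>
    simp only [psi0, gv, ge, map_mul, FreeAlgebra.lift_ι_apply]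
    cases e with
    | inl e =>
      simp only [psiGen]
      exact se' R (HH) (Sum.inl e)
    | inr i =>
      simp only [psiGen]
      have h := vk_mul_P R G v0 n (i : ℕ) i.isLt
      exact h
  | er e =>
    simp only [psi0, gv, ge, map_mul, FreeAlgebra.lift_ι_apply]
    cases e with
    | inl e =>
      simp only [psiGen]
      exact er' R (HH) (Sum.inl e)
    | inr i =>
      simp only [psiGen]
      exact P_mul_v0 R G v0 n (i : ℕ) i.isLt
  | rg e =>
    simp only [psi0, gv, gg, map_mul, FreeAlgebra.lift_ι_apply]
    cases e with
    | inl e =>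
      simp only [psiGen]
      exact rg' R (HH) (Sum.inl e)
    | inr i =>
      simp only [psiGen]
      exact v0_mul_Q R G v0 n (i : ℕ) i.isLt
  | gs e =>
    simp only [psi0, gv, gg, map_mul, FreeAlgebra.lift_ι_apply]
    cases e with
    | inl e =>
      simp only [psiGen]
      exact gs' R (HH) (Sum.inl e)
    | inr i =>
      simp only [psiGen]
      have h := Q_mul_vk R G v0 n (i : ℕ) i.isLt
      exact h
  | ck1 e f =>
    simp only [psi0, gv, ge, gg, map_mul, apply_ite (FreeAlgebra.lift R (psiGen R G v0 n)),
      map_zero, FreeAlgebra.lift_ι_apply]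
    cases e with
    | inl e =>
      cases f with
      | inl f =>
        simp only [psiGen]
        rw [ck1' R (HH) (Sum.inl e) (Sum.inl f)]
        by_cases h : e = f
        · subst h; erw [if_pos rfl]
        · erw [if_neg (fun hc => h (Sum.inl.inj hc))]
      | inr j =>
        simp only [psiGen]
        erw [if_neg (fun hc => Sum.inl_ne_inr hc)]
        exact Gl_mul_P R G v0 n e (j : ℕ) j.isLt
    | inr i =>
      cases f with
      | inl f =>
        simp only [psiGen]
        erw [if_neg (fun hc => Sum.inr_ne_inl hc)]
        exact Q_mul_El R G v0 n (i : ℕ) i.isLt f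
      | inr j =>
        simp only [psiGen]
        by_cases h : i = j
        · subst h
          erw [if_pos rfl, QP R G v0 n (i : ℕ) i.isLt]; rfl
        · erw [if_neg (fun hc => h (Sum.inr.inj hc))]
          exact QP_ne R G v0 n (i : ℕ) (j : ℕ) i.isLt j.isLt
            (fun hc => h (Fin.ext hc))
  | ck2 v hreg =>
    rw [map_sum]
    simp only [map_mul, ge, gg, gv, psi0, FreeAlgebra.lift_ι_apply]
    cases v with
    | inl u =>
      have hHr : IsRegular (HH) (Sum.inl u) := hreg
      simp only [psiGen]
      rw [← ck2' R (HH) (Sum.inl u) hHr]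
      apply Finset.sum_congr rfl
      intro e he
      rw [Set.Finite.mem_toFinset] at he
      cases e with
      | inl e => simp only [psiGen]
      | inr i => exact absurd he (fun hc => Sum.inr_ne_inl hc)
    | inr i =>
      have hfin : hreg.1.toFinset = {Sum.inr i} := by
        ext e
        cases e with
        | inl e => erw [Set.Finite.mem_toFinset, Set.mem_setOf_eq, Finset.mem_singleton]; simp [attachFan]
        | inr j => erw [Set.Finite.mem_toFinset, Set.mem_setOf_eq, Finset.mem_singleton]; simp [attachFan]
      erw [hfin, Finset.sum_singleton]
      simp only [psiGen]
      have h := PQ R G v0 n (i : ℕ) i.isLt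
      simpa using h

end Psi
section Final

open DGraph Classical

variable (R : Type) [CommRing R] (G : DGraph) (v0 : G.V) (n : ℕ)

local notation "HH" => attachHead G v0 n
local notation "FF" => attachFan G v0 n

def Phi : LPA R (HH) →ₐ[R] LPA R (FF) :=
  RingQuot.liftAlgHom R ⟨phi0 R G v0 n, phi0_rel R G v0 n⟩

def Psi : LPA R (FF) →ₐ[R] LPA R (HH) :=
  RingQuot.liftAlgHom R ⟨psi0 R G v0 n, psi0_rel R G v0 n⟩

lemma Phi_V (v : (HH).V) : Phi R G v0 n (Vq R (HH) v) = Vq R (FF) v := by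
  rw [Vq, Phi, RingQuot.liftAlgHom_mkAlgHom_apply, phi0, gv, FreeAlgebra.lift_ι_apply, phiGen]

lemma Phi_E (e : (HH).E) :
    Phi R G v0 n (Eq' R (HH) e) = phiGen R G v0 n (Gen.edge e) := by
  rw [Eq', Phi, RingQuot.liftAlgHom_mkAlgHom_apply, phi0, ge, FreeAlgebra.lift_ι_apply]

lemma Phi_G (e : (HH).E) :
    Phi R G v0 n (Gq R (HH) e) = phiGen R G v0 n (Gen.ghost e) := by
  rw [Gq, Phi, RingQuot.liftAlgHom_mkAlgHom_apply, phi0, gg, FreeAlgebra.lift_ι_apply]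

lemma Psi_V (v : (FF).V) : Psi R G v0 n (Vq R (FF) v) = Vq R (HH) v := by
  rw [Vq, Psi, RingQuot.liftAlgHom_mkAlgHom_apply, psi0, gv, FreeAlgebra.lift_ι_apply, psiGen]

lemma Psi_E (e : (FF).E) :
    Psi R G v0 n (Eq' R (FF) e) = psiGen R G v0 n (Gen.edge e) := by
  rw [Eq', Psi, RingQuot.liftAlgHom_mkAlgHom_apply, psi0, ge, FreeAlgebra.lift_ι_apply]

lemma Psi_G (e : (FF).E) :
    Psi R G v0 n (Gq R (FF) e) = psiGen R G v0 n (Gen.ghost e) := by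
  rw [Gq, Psi, RingQuot.liftAlgHom_mkAlgHom_apply, psi0, gg, FreeAlgebra.lift_ι_apply]

lemma Phi_P : ∀ k, (hk : k < n) →
    Phi R G v0 n (P R G v0 n k) = Eq' R (FF) (Sum.inr ⟨k, hk⟩)
  | 0, hk => by
    erw [P, emh_eq R G v0 n 0 hk, Phi_E]
    simp [phiGen]
  | (k+1), hk => by
    have hkk := Nat.lt_of_succ_lt hk
    erw [P, map_mul, emh_eq R G v0 n (k+1) hk, Phi_E, Phi_P k hkk]
    simp only [phiGen]
    rw [dif_neg (Nat.succ_ne_zero k)]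
    rw [mul_assoc, show (prd n ⟨k+1, hk⟩ : Fin n) = ⟨k, hkk⟩ from rfl, fan_GE, if_pos rfl,
      fan_E_mul_v0]

lemma Phi_Q : ∀ k, (hk : k < n) →
    Phi R G v0 n (Q R G v0 n k) = Gq R (FF) (Sum.inr ⟨k, hk⟩)
  | 0, hk => by
    erw [Q, gm_eq R G v0 n 0 hk, Phi_G]
    simp [phiGen]
  | (k+1), hk => by
    have hkk := Nat.lt_of_succ_lt hk
    erw [Q, map_mul, gm_eq R G v0 n (k+1) hk, Phi_G, Phi_Q k hkk]
    simp only [phiGen]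
    rw [dif_neg (Nat.succ_ne_zero k)]
    rw [← mul_assoc, show (prd n ⟨k+1, hk⟩ : Fin n) = ⟨k, hkk⟩ from rfl, fan_GE, if_pos rfl,
      fan_v0_mul_G]

lemma comp1 : (Phi R G v0 n).comp (Psi R G v0 n) = AlgHom.id R (LPA R (FF)) := by
  apply RingQuot.ringQuot_ext'
  apply FreeAlgebra.hom_ext
  funext g
  show Phi R G v0 n (Psi R G v0 n
      (RingQuot.mkAlgHom R (LRel R (FF)) (FreeAlgebra.ι R g))) =
    RingQuot.mkAlgHom R (LRel R (FF)) (FreeAlgebra.ι R g)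
  cases g with
  | vert v =>
    erw [show RingQuot.mkAlgHom R (LRel R (FF)) (FreeAlgebra.ι R (Gen.vert v)) =
      Vq R (FF) v from rfl, Psi_V, Phi_V]
  | edge e =>
    rw [show RingQuot.mkAlgHom R (LRel R (FF)) (FreeAlgebra.ι R (Gen.edge e)) =
      Eq' R (FF) e from rfl, Psi_E]
    cases e with
    | inl e => erw [show psiGen R G v0 n (Gen.edge (Sum.inl e)) = Eq' R (HH) (Sum.inl e)
        from rfl, Phi_E]; rfl
    | inr i =>
      rw [show psiGen R G v0 n (Gen.edge (Sum.inr i)) = P R G v0 n (i : ℕ) from rfl,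
        Phi_P R G v0 n (i : ℕ) i.isLt]
  | ghost e =>
    rw [show RingQuot.mkAlgHom R (LRel R (FF)) (FreeAlgebra.ι R (Gen.ghost e)) =
      Gq R (FF) e from rfl, Psi_G]
    cases e with
    | inl e => erw [show psiGen R G v0 n (Gen.ghost (Sum.inl e)) = Gq R (HH) (Sum.inl e)
        from rfl, Phi_G]; rfl
    | inr i =>
      rw [show psiGen R G v0 n (Gen.ghost (Sum.inr i)) = Q R G v0 n (i : ℕ) from rfl,
        Phi_Q R G v0 n (i : ℕ) i.isLt]

lemma comp2 : (Psi R G v0 n).comp (Phi R G v0 n) = AlgHom.id R (LPA R (HH)) := by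
  apply RingQuot.ringQuot_ext'
  apply FreeAlgebra.hom_ext
  funext g
  show Psi R G v0 n (Phi R G v0 n
      (RingQuot.mkAlgHom R (LRel R (HH)) (FreeAlgebra.ι R g))) =
    RingQuot.mkAlgHom R (LRel R (HH)) (FreeAlgebra.ι R g)
  cases g with
  | vert v =>
    erw [show RingQuot.mkAlgHom R (LRel R (HH)) (FreeAlgebra.ι R (Gen.vert v)) =
      Vq R (HH) v from rfl, Phi_V, Psi_V]
  | edge e =>
    rw [show RingQuot.mkAlgHom R (LRel R (HH)) (FreeAlgebra.ι R (Gen.edge e)) =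
      Eq' R (HH) e from rfl, Phi_E]
    cases e with
    | inl e => erw [show phiGen R G v0 n (Gen.edge (Sum.inl e)) = Eq' R (FF) (Sum.inl e)
        from rfl, Psi_E]; rfl
    | inr i =>
      obtain ⟨iv, hlt⟩ := i
      simp only [phiGen]
      cases iv with
      | zero =>
        erw [dif_pos rfl, Psi_E,
          show psiGen R G v0 n (Gen.edge (Sum.inr ⟨0, hlt⟩)) = P R G v0 n 0 from rfl,
          P, emh_eq R G v0 n 0 hlt]
      | succ k =>
        have hkk := Nat.lt_of_succ_lt hlt
        erw [dif_neg (Nat.succ_ne_zero k), map_mul, Psi_E, Psi_G,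
          show psiGen R G v0 n (Gen.edge (Sum.inr ⟨k+1, hlt⟩)) = P R G v0 n (k+1) from rfl,
          show psiGen R G v0 n (Gen.ghost (Sum.inr (prd n ⟨k+1, hlt⟩))) = Q R G v0 n k
            from rfl,
          P, emh_eq R G v0 n (k+1) hlt, mul_assoc, PQ R G v0 n k hkk,
          ← head_r_succ G v0 n k hlt, er']
  | ghost e =>
    rw [show RingQuot.mkAlgHom R (LRel R (HH)) (FreeAlgebra.ι R (Gen.ghost e)) =
      Gq R (HH) e from rfl, Phi_G]
    cases e with
    | inl e => erw [show phiGen R G v0 n (Gen.ghost (Sum.inl e)) = Gq R (FF) (Sum.inl e)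
        from rfl, Psi_G]; rfl
    | inr i =>
      obtain ⟨iv, hlt⟩ := i
      simp only [phiGen]
      cases iv with
      | zero =>
        erw [dif_pos rfl, Psi_G,
          show psiGen R G v0 n (Gen.ghost (Sum.inr ⟨0, hlt⟩)) = Q R G v0 n 0 from rfl,
          Q, gm_eq R G v0 n 0 hlt]
      | succ k =>
        have hkk := Nat.lt_of_succ_lt hlt
        erw [dif_neg (Nat.succ_ne_zero k), map_mul, Psi_E, Psi_G,
          show psiGen R G v0 n (Gen.ghost (Sum.inr ⟨k+1, hlt⟩)) = Q R G v0 n (k+1) from rfl,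
          show psiGen R G v0 n (Gen.edge (Sum.inr (prd n ⟨k+1, hlt⟩))) = P R G v0 n k
            from rfl,
          Q, gm_eq R G v0 n (k+1) hlt, ← mul_assoc, PQ R G v0 n k hkk,
          ← head_r_succ G v0 n k hlt, rg']

end Final

theorem stmt1 (R : Type) [CommRing R] (G : DGraph) (v0 : G.V) (n : ℕ) (hn : 0 < n) :
    Nonempty (LPA R (attachHead G v0 n) ≃ₐ[R] LPA R (attachFan G v0 n)) :=
  ⟨AlgEquiv.ofAlgHom (Phi R G v0 n) (Psi R G v0 n) (comp1 R G v0 n) (comp2 R G v0 n)⟩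
end
end

section
/- Let R be a commutative unital ring, E a graph, e_0 ∈ E^1 an edge, and n a positive integer. Then L_R(E(r(e_0), n)) ≅ L_R(E(e_0, n)), where E(e_0, n) is the graph obtained from E by replacing the edge e_0 by a path of length n+1 through n new vertices, and E(r(e_0), n) is the graph obtained from E by attaching a head of length n at the vertex r(e_0). -/
noncomputable section

open DGraph

/-- `E(e₀,n)`: replace the edge `e₀` by a path of length `n+1` through `n` new
vertices `v₁,…,vₙ` (index `j : Fin (n+1)` is the new edge `e_{j+1}`, index `i : Fin n`
is the new vertex `v_{i+1}`, and `v₀ := r(e₀)`).  So `s(e_{n+1}) = s(e₀)`,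
`s(e_j) = v_j` for `j ≤ n`, `r(e_1) = r(e₀)`, and `r(e_j) = v_{j-1}` for `j ≥ 2`. -/
def elongate (G : DGraph) (e0 : G.E) (n : ℕ) : DGraph where
  V := G.V ⊕ Fin n
  E := {e : G.E // e ≠ e0} ⊕ Fin (n + 1)
  s := Sum.elim (fun e => Sum.inl (G.s e.1)) (fun j =>
    if h : (j : ℕ) = n then Sum.inl (G.s e0)
    else Sum.inr ⟨(j : ℕ), lt_of_le_of_ne (Nat.lt_succ_iff.mp j.isLt) h⟩)
  r := Sum.elim (fun e => Sum.inl (G.r e.1)) (fun j =>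
    if h : (j : ℕ) = 0 then Sum.inl (G.r e0)
    else Sum.inr ⟨(j : ℕ) - 1,
      Nat.lt_of_lt_of_le (Nat.sub_lt (Nat.pos_of_ne_zero h) one_pos)
        (Nat.lt_succ_iff.mp j.isLt)⟩)

attribute [reducible] attachHead elongate

namespace Helper

variable (R : Type) [CommRing R] (K : DGraph)

lemma lpa_rel {x y : FA R K} (h : LRel R K x y) :
    RingQuot.mkAlgHom R (LRel R K) x = RingQuot.mkAlgHom R (LRel R K) y :=
  RingQuot.mkAlgHom_rel R h

lemma Vq_mul_self (v : K.V) : Vq R K v * Vq R K v = Vq R K v := by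
  have := lpa_rel R K (LRel.vmul v v)
  simpa [Vq, map_mul] using this

lemma Vq_mul_ne {u v : K.V} (h : u ≠ v) : Vq R K u * Vq R K v = 0 := by
  have := lpa_rel R K (LRel.vmul u v)
  simpa [Vq, map_mul, h] using this

lemma se (e : K.E) : Vq R K (K.s e) * Eq' R K e = Eq' R K e := by
  have := lpa_rel R K (LRel.se e)
  simpa [Vq, Eq', map_mul] using this

lemma er (e : K.E) : Eq' R K e * Vq R K (K.r e) = Eq' R K e := by
  have := lpa_rel R K (LRel.er e)
  simpa [Vq, Eq', map_mul] using this

lemma rg (e : K.E) : Vq R K (K.r e) * Gq R K e = Gq R K e := by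
  have := lpa_rel R K (LRel.rg e)
  simpa [Vq, Gq, map_mul] using this

lemma gs (e : K.E) : Gq R K e * Vq R K (K.s e) = Gq R K e := by
  have := lpa_rel R K (LRel.gs e)
  simpa [Vq, Gq, map_mul] using this

lemma ck1_self (e : K.E) : Gq R K e * Eq' R K e = Vq R K (K.r e) := by
  have := lpa_rel R K (LRel.ck1 e e)
  simpa [Vq, Eq', Gq, map_mul] using this

lemma ck1_ne {e f : K.E} (h : e ≠ f) : Gq R K e * Eq' R K f = 0 := by
  have := lpa_rel R K (LRel.ck1 e f)
  simpa [Vq, Eq', Gq, map_mul, h] using this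

lemma ck2 (v : K.V) (h : IsRegular K v) :
    (h.1.toFinset.sum fun e => Eq' R K e * Gq R K e) = Vq R K v := by
  have := lpa_rel R K (LRel.ck2 v h)
  simpa [Vq, Eq', Gq, map_mul, map_sum] using this

lemma ck2_unique (v : K.V) (e : K.E) (hs : K.s e = v) (hu : ∀ f, K.s f = v → f = e) :
    Eq' R K e * Gq R K e = Vq R K v := by
  have hset : {f : K.E | K.s f = v} = {e} := by
    ext f; simp only [Set.mem_setOf_eq, Set.mem_singleton_iff]
    exact ⟨fun h => hu f h, fun h => h ▸ hs⟩
  have hreg : IsRegular K v := ⟨hset ▸ Set.finite_singleton e, ⟨e, hs⟩⟩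
  have := ck2 R K v hreg
  rwa [show hreg.1.toFinset = {e} by
    ext f; simp [Set.Finite.mem_toFinset, hset], Finset.sum_singleton] at this

end Helper
namespace Helper

variable (R : Type) [CommRing R] (G : DGraph) (e0 : G.E) (n : ℕ)

abbrev AH := attachHead G (G.r e0) n
abbrev EL := elongate G e0 n

/-! ### Elongated graph facts -/

def hidx (k : ℕ) : (EL G e0 n).E := Sum.inr ⟨k % (n+1), Nat.mod_lt _ n.succ_pos⟩

lemma hidx_eq {k : ℕ} (hk : k ≤ n) : hidx G e0 n k = Sum.inr ⟨k, Nat.lt_succ_of_le hk⟩ := by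
  simp [hidx, Nat.mod_eq_of_lt (Nat.lt_succ_of_le hk)]

lemma EL_s_inl (e : {e : G.E // e ≠ e0}) : (EL G e0 n).s (Sum.inl e) = Sum.inl (G.s e.1) := rfl

lemma EL_r_inl (e : {e : G.E // e ≠ e0}) : (EL G e0 n).r (Sum.inl e) = Sum.inl (G.r e.1) := rfl

lemma EL_s_lt {j : Fin (n+1)} (hj : (j : ℕ) < n) :
    (EL G e0 n).s (Sum.inr j) = Sum.inr ⟨j, hj⟩ := by
  simp [elongate, Nat.ne_of_lt hj]

lemma EL_s_top {j : Fin (n+1)} (hj : (j : ℕ) = n) :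
    (EL G e0 n).s (Sum.inr j) = Sum.inl (G.s e0) := by
  simp [elongate, hj]

lemma EL_r_zero {j : Fin (n+1)} (hj : (j : ℕ) = 0) :
    (EL G e0 n).r (Sum.inr j) = Sum.inl (G.r e0) := by
  simp only [elongate, Sum.elim_inr]; rw [dif_pos hj]

lemma EL_r_succ {j : Fin (n+1)} {k : ℕ} (hj : (j : ℕ) = k + 1) (hk : k < n) :
    (EL G e0 n).r (Sum.inr j) = Sum.inr ⟨k, hk⟩ := by
  simp only [elongate, Sum.elim_inr]; rw [dif_neg (by omega)]
  exact congrArg Sum.inr (Fin.ext (by simp [hj]))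

lemma EL_unique_src {k : ℕ} (hk : k < n) :
    ∀ f, (EL G e0 n).s f = Sum.inr ⟨k, hk⟩ → f = Sum.inr ⟨k, Nat.lt_succ_of_le hk.le⟩ := by
  rintro (e | j) hf
  · exact absurd hf (by simp [elongate])
  · by_cases hj : (j : ℕ) = n
    · rw [EL_s_top G e0 n hj] at hf; exact absurd hf (by simp)
    · rw [EL_s_lt G e0 n (lt_of_le_of_ne (Nat.lt_succ_iff.mp j.isLt) hj)] at hf
      have hjk : (j : ℕ) = k := congrArg Fin.val (Sum.inr_injective hf)
      exact congrArg Sum.inr (Fin.ext hjk)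

lemma EL_ck2_inr {k : ℕ} (hk : k < n) :
    Eq' R (EL G e0 n) (Sum.inr ⟨k, Nat.lt_succ_of_le hk.le⟩) *
      Gq R (EL G e0 n) (Sum.inr ⟨k, Nat.lt_succ_of_le hk.le⟩) =
    Vq R (EL G e0 n) (Sum.inr ⟨k, hk⟩) := by
  refine ck2_unique R _ _ _ ?_ (EL_unique_src G e0 n hk)
  exact EL_s_lt G e0 n (j := ⟨k, Nat.lt_succ_of_le hk.le⟩) hk

/-- `P k = e_k * e_{k-1} * ⋯ * e_0` in `L(EL)`. -/
def P : ℕ → LPA R (EL G e0 n)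
  | 0 => Eq' R _ (hidx G e0 n 0)
  | k+1 => Eq' R _ (hidx G e0 n (k+1)) * P k

/-- `Pg k = e_0^* * e_1^* * ⋯ * e_k^*`. -/
def Pg : ℕ → LPA R (EL G e0 n)
  | 0 => Gq R _ (hidx G e0 n 0)
  | k+1 => Pg k * Gq R _ (hidx G e0 n (k+1))

lemma P_mul_vr : ∀ k, P R G e0 n k * Vq R _ (Sum.inl (G.r e0)) = P R G e0 n k
  | 0 => by
    have h0 : (EL G e0 n).r (hidx G e0 n 0) = Sum.inl (G.r e0) := by
      rw [hidx_eq G e0 n (Nat.zero_le n)]; exact EL_r_zero G e0 n rfl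
    rw [P, ← h0, er]
  | k+1 => by rw [P, mul_assoc, P_mul_vr k]

lemma vr_mul_Pg : ∀ k, Vq R _ (Sum.inl (G.r e0)) * Pg R G e0 n k = Pg R G e0 n k
  | 0 => by
    have h0 : (EL G e0 n).r (hidx G e0 n 0) = Sum.inl (G.r e0) := by
      rw [hidx_eq G e0 n (Nat.zero_le n)]; exact EL_r_zero G e0 n rfl
    rw [Pg, ← h0, rg]
  | k+1 => by rw [Pg, ← mul_assoc, vr_mul_Pg k]

lemma vs_mul_P {k : ℕ} (hk : k < n) :
    Vq R _ (Sum.inr ⟨k, hk⟩) * P R G e0 n k = P R G e0 n k := by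
  have hs : (EL G e0 n).s (hidx G e0 n k) = Sum.inr ⟨k, hk⟩ := by
    rw [hidx_eq G e0 n hk.le]; exact EL_s_lt G e0 n hk
  cases k with
  | zero => rw [P, ← hs, se]
  | succ m => rw [P, ← mul_assoc, ← hs, se]

lemma Pg_mul_vs {k : ℕ} (hk : k < n) :
    Pg R G e0 n k * Vq R _ (Sum.inr ⟨k, hk⟩) = Pg R G e0 n k := by
  have hs : (EL G e0 n).s (hidx G e0 n k) = Sum.inr ⟨k, hk⟩ := by
    rw [hidx_eq G e0 n hk.le]; exact EL_s_lt G e0 n hk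
  cases k with
  | zero => rw [Pg, ← hs, gs]
  | succ m => rw [Pg, mul_assoc, ← hs, gs]

lemma Pg_mul_P : ∀ k, k ≤ n → Pg R G e0 n k * P R G e0 n k = Vq R _ (Sum.inl (G.r e0))
  | 0, _ => by
    have h0 : (EL G e0 n).r (hidx G e0 n 0) = Sum.inl (G.r e0) := by
      rw [hidx_eq G e0 n (Nat.zero_le n)]; exact EL_r_zero G e0 n rfl
    rw [Pg, P, ck1_self, h0]
  | k+1, hk => by
    have hkn : k < n := Nat.lt_of_succ_le hk
    have hr : (EL G e0 n).r (hidx G e0 n (k+1)) = Sum.inr ⟨k, hkn⟩ := by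
      rw [hidx_eq G e0 n hk]; exact EL_r_succ G e0 n rfl hkn
    rw [Pg, P]
    calc Pg R G e0 n k * Gq R _ (hidx G e0 n (k+1)) *
          (Eq' R _ (hidx G e0 n (k+1)) * P R G e0 n k)
        = Pg R G e0 n k * (Gq R _ (hidx G e0 n (k+1)) * Eq' R _ (hidx G e0 n (k+1)))
            * P R G e0 n k := by simp only [mul_assoc]
      _ = Pg R G e0 n k * Vq R _ (Sum.inr ⟨k, hkn⟩) * P R G e0 n k := by
            rw [ck1_self, hr]
      _ = Pg R G e0 n k * P R G e0 n k := by rw [Pg_mul_vs R G e0 n hkn]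
      _ = _ := Pg_mul_P k hkn.le

lemma P_mul_Pg : ∀ k, (hk : k < n) → P R G e0 n k * Pg R G e0 n k = Vq R _ (Sum.inr ⟨k, hk⟩)
  | 0, hk => by
    rw [P, Pg, hidx_eq G e0 n (Nat.zero_le n)]
    exact EL_ck2_inr R G e0 n hk
  | k+1, hk => by
    have hkn : k < n := Nat.lt_of_succ_lt hk
    have hr : (EL G e0 n).r (hidx G e0 n (k+1)) = Sum.inr ⟨k, hkn⟩ := by
      rw [hidx_eq G e0 n hk.le]; exact EL_r_succ G e0 n rfl hkn
    rw [P, Pg]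
    calc Eq' R _ (hidx G e0 n (k+1)) * P R G e0 n k *
          (Pg R G e0 n k * Gq R _ (hidx G e0 n (k+1)))
        = Eq' R _ (hidx G e0 n (k+1)) * (P R G e0 n k * Pg R G e0 n k)
            * Gq R _ (hidx G e0 n (k+1)) := by simp only [mul_assoc]
      _ = Eq' R _ (hidx G e0 n (k+1)) * Vq R _ (Sum.inr ⟨k, hkn⟩)
            * Gq R _ (hidx G e0 n (k+1)) := by rw [P_mul_Pg k hkn]
      _ = Eq' R _ (hidx G e0 n (k+1)) * Gq R _ (hidx G e0 n (k+1)) := by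
            rw [← hr, er]
      _ = _ := by rw [hidx_eq G e0 n hk.le]; exact EL_ck2_inr R G e0 n hk

lemma P_succ_mul_Pg_succ {k : ℕ} (hk : k < n) :
    P R G e0 n (k+1) * Pg R G e0 n (k+1) =
      Eq' R _ (hidx G e0 n (k+1)) * Gq R _ (hidx G e0 n (k+1)) := by
  have hr : (EL G e0 n).r (hidx G e0 n (k+1)) = Sum.inr ⟨k, hk⟩ := by
    rw [hidx_eq G e0 n hk]; exact EL_r_succ G e0 n rfl hk
  rw [P, Pg]
  calc Eq' R _ (hidx G e0 n (k+1)) * P R G e0 n k *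
        (Pg R G e0 n k * Gq R _ (hidx G e0 n (k+1)))
      = Eq' R _ (hidx G e0 n (k+1)) * (P R G e0 n k * Pg R G e0 n k)
          * Gq R _ (hidx G e0 n (k+1)) := by simp only [mul_assoc]
    _ = Eq' R _ (hidx G e0 n (k+1)) * Vq R _ (Sum.inr ⟨k, hk⟩)
          * Gq R _ (hidx G e0 n (k+1)) := by rw [P_mul_Pg R G e0 n k hk]
    _ = _ := by rw [← hr, er]

end Helper
namespace Helper

variable (R : Type) [CommRing R] (G : DGraph) (e0 : G.E) (n : ℕ)

/-! ### Attach-head graph facts -/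

lemma AH_s_inl (e : G.E) : (AH G e0 n).s (Sum.inl e) = Sum.inl (G.s e) := rfl
lemma AH_r_inl (e : G.E) : (AH G e0 n).r (Sum.inl e) = Sum.inl (G.r e) := rfl
lemma AH_s_inr (i : Fin n) : (AH G e0 n).s (Sum.inr i) = Sum.inr i := rfl

lemma AH_r_zero {i : Fin n} (hi : (i : ℕ) = 0) :
    (AH G e0 n).r (Sum.inr i) = Sum.inl (G.r e0) := by
  simp [attachHead, hi]

lemma AH_r_succ {i : Fin n} {k : ℕ} (hi : (i : ℕ) = k + 1) (hk : k < n) :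
    (AH G e0 n).r (Sum.inr i) = Sum.inr ⟨k, hk⟩ := by
  simp [attachHead, hi]

lemma AH_unique_src (i : Fin n) :
    ∀ f, (AH G e0 n).s f = Sum.inr i → f = Sum.inr i := by
  rintro (e | j) hf
  · exact absurd hf (by simp [attachHead])
  · rw [AH_s_inr] at hf
    exact congrArg Sum.inr (Sum.inr_injective hf)

lemma AH_ck2_inr (i : Fin n) :
    Eq' R (AH G e0 n) (Sum.inr i) * Gq R (AH G e0 n) (Sum.inr i) =
      Vq R (AH G e0 n) (Sum.inr i) := by
  exact ck2_unique R _ _ _ (AH_s_inr G e0 n i) (AH_unique_src G e0 n i)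

variable (hn : 0 < n)

def aidx (k : ℕ) : (AH G e0 n).E := Sum.inr ⟨k % n, Nat.mod_lt _ hn⟩

lemma aidx_eq {k : ℕ} (hk : k < n) : aidx G e0 n hn k = Sum.inr ⟨k, hk⟩ := by
  simp [aidx, Nat.mod_eq_of_lt hk]

/-- `Qf k = f_k * f_{k-1} * ⋯ * f_0`. -/
def Qf : ℕ → LPA R (AH G e0 n)
  | 0 => Eq' R _ (aidx G e0 n hn 0)
  | k+1 => Eq' R _ (aidx G e0 n hn (k+1)) * Qf k

/-- `Qg k = f_0^* * f_1^* * ⋯ * f_k^*`. -/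
def Qg : ℕ → LPA R (AH G e0 n)
  | 0 => Gq R _ (aidx G e0 n hn 0)
  | k+1 => Qg k * Gq R _ (aidx G e0 n hn (k+1))

lemma Qf_mul_vr : ∀ k, Qf R G e0 n hn k * Vq R _ (Sum.inl (G.r e0)) = Qf R G e0 n hn k
  | 0 => by
    have h0 : (AH G e0 n).r (aidx G e0 n hn 0) = Sum.inl (G.r e0) := by
      rw [aidx_eq G e0 n hn hn]; exact AH_r_zero G e0 n rfl
    rw [Qf, ← h0, er]
  | k+1 => by rw [Qf, mul_assoc, Qf_mul_vr k]

lemma vr_mul_Qg : ∀ k, Vq R _ (Sum.inl (G.r e0)) * Qg R G e0 n hn k = Qg R G e0 n hn k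
  | 0 => by
    have h0 : (AH G e0 n).r (aidx G e0 n hn 0) = Sum.inl (G.r e0) := by
      rw [aidx_eq G e0 n hn hn]; exact AH_r_zero G e0 n rfl
    rw [Qg, ← h0, rg]
  | k+1 => by rw [Qg, ← mul_assoc, vr_mul_Qg k]

lemma vs_mul_Qf {k : ℕ} (hk : k < n) :
    Vq R _ (Sum.inr ⟨k, hk⟩) * Qf R G e0 n hn k = Qf R G e0 n hn k := by
  have hs : (AH G e0 n).s (aidx G e0 n hn k) = Sum.inr ⟨k, hk⟩ := by
    rw [aidx_eq G e0 n hn hk]; exact AH_s_inr G e0 n _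
  cases k with
  | zero => rw [Qf, ← hs, se]
  | succ m => rw [Qf, ← mul_assoc, ← hs, se]

lemma Qg_mul_vs {k : ℕ} (hk : k < n) :
    Qg R G e0 n hn k * Vq R _ (Sum.inr ⟨k, hk⟩) = Qg R G e0 n hn k := by
  have hs : (AH G e0 n).s (aidx G e0 n hn k) = Sum.inr ⟨k, hk⟩ := by
    rw [aidx_eq G e0 n hn hk]; exact AH_s_inr G e0 n _
  cases k with
  | zero => rw [Qg, ← hs, gs]
  | succ m => rw [Qg, mul_assoc, ← hs, gs]

lemma Qg_mul_Qf : ∀ k, k < n → Qg R G e0 n hn k * Qf R G e0 n hn k = Vq R _ (Sum.inl (G.r e0))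
  | 0, _ => by
    have h0 : (AH G e0 n).r (aidx G e0 n hn 0) = Sum.inl (G.r e0) := by
      rw [aidx_eq G e0 n hn hn]; exact AH_r_zero G e0 n rfl
    rw [Qg, Qf, ck1_self, h0]
  | k+1, hk => by
    have hkn : k < n := Nat.lt_of_succ_lt hk
    have hr : (AH G e0 n).r (aidx G e0 n hn (k+1)) = Sum.inr ⟨k, hkn⟩ := by
      rw [aidx_eq G e0 n hn hk]; exact AH_r_succ G e0 n rfl hkn
    rw [Qg, Qf]
    calc Qg R G e0 n hn k * Gq R _ (aidx G e0 n hn (k+1)) *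
          (Eq' R _ (aidx G e0 n hn (k+1)) * Qf R G e0 n hn k)
        = Qg R G e0 n hn k * (Gq R _ (aidx G e0 n hn (k+1)) * Eq' R _ (aidx G e0 n hn (k+1)))
            * Qf R G e0 n hn k := by simp only [mul_assoc]
      _ = Qg R G e0 n hn k * Vq R _ (Sum.inr ⟨k, hkn⟩) * Qf R G e0 n hn k := by
            rw [ck1_self, hr]
      _ = Qg R G e0 n hn k * Qf R G e0 n hn k := by rw [Qg_mul_vs R G e0 n hn hkn]
      _ = _ := Qg_mul_Qf k hkn

lemma Qf_mul_Qg : ∀ k, (hk : k < n) →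
    Qf R G e0 n hn k * Qg R G e0 n hn k = Vq R _ (Sum.inr ⟨k, hk⟩)
  | 0, hk => by
    rw [Qf, Qg, aidx_eq G e0 n hn hn]
    exact AH_ck2_inr R G e0 n ⟨0, hk⟩
  | k+1, hk => by
    have hkn : k < n := Nat.lt_of_succ_lt hk
    have hr : (AH G e0 n).r (aidx G e0 n hn (k+1)) = Sum.inr ⟨k, hkn⟩ := by
      rw [aidx_eq G e0 n hn hk]; exact AH_r_succ G e0 n rfl hkn
    rw [Qf, Qg]
    calc Eq' R _ (aidx G e0 n hn (k+1)) * Qf R G e0 n hn k *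
          (Qg R G e0 n hn k * Gq R _ (aidx G e0 n hn (k+1)))
        = Eq' R _ (aidx G e0 n hn (k+1)) * (Qf R G e0 n hn k * Qg R G e0 n hn k)
            * Gq R _ (aidx G e0 n hn (k+1)) := by simp only [mul_assoc]
      _ = Eq' R _ (aidx G e0 n hn (k+1)) * Vq R _ (Sum.inr ⟨k, hkn⟩)
            * Gq R _ (aidx G e0 n hn (k+1)) := by rw [Qf_mul_Qg k hkn]
      _ = Eq' R _ (aidx G e0 n hn (k+1)) * Gq R _ (aidx G e0 n hn (k+1)) := by
            rw [← hr, er]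
      _ = _ := by rw [aidx_eq G e0 n hn hk]; exact AH_ck2_inr R G e0 n ⟨k+1, hk⟩

end Helper
namespace Helper

variable (R : Type) [CommRing R] (G : DGraph) (e0 : G.E) (n : ℕ)

/-! ### The edge bijection between the two graphs -/

open scoped Classical

def bmap : (AH G e0 n).E → (EL G e0 n).E
  | Sum.inl e => if h : e = e0 then Sum.inr ⟨n, n.lt_succ_self⟩ else Sum.inl ⟨e, h⟩
  | Sum.inr i => Sum.inr i.castSucc

def bmap' : (EL G e0 n).E → (AH G e0 n).E
  | Sum.inl e => Sum.inl e.1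
  | Sum.inr j => if h : (j : ℕ) = n then Sum.inl e0
      else Sum.inr ⟨j, lt_of_le_of_ne (Nat.lt_succ_iff.mp j.isLt) h⟩

lemma bmap'_bmap (x) : bmap' G e0 n (bmap G e0 n x) = x := by
  rcases x with e | i
  · by_cases h : e = e0
    · simp [bmap, bmap', h]
    · simp [bmap, bmap', h]
  · have hi : (i : ℕ) ≠ n := Nat.ne_of_lt i.isLt
    simp [bmap, bmap', hi]

lemma bmap_bmap' (y) : bmap G e0 n (bmap' G e0 n y) = y := by
  rcases y with e | j
  · simp [bmap, bmap', e.2]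
  · by_cases h : (j : ℕ) = n
    · simp [bmap, bmap', h]
      exact Fin.ext (a := ⟨n, n.lt_succ_self⟩) (b := j) h.symm
    · simp only [bmap, bmap', dif_neg h]
      exact congrArg Sum.inr (Fin.ext rfl)

lemma bmap_inj : Function.Injective (bmap G e0 n) :=
  Function.LeftInverse.injective (bmap'_bmap G e0 n)

lemma bmap'_inj : Function.Injective (bmap' G e0 n) :=
  Function.LeftInverse.injective (bmap_bmap' G e0 n)

lemma s_bmap (x) : (EL G e0 n).s (bmap G e0 n x) = (AH G e0 n).s x := by
  rcases x with e | i
  · by_cases h : e = e0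
    · rw [bmap, dif_pos h, EL_s_top G e0 n rfl, AH_s_inl, h]
    · rw [bmap, dif_neg h]; rfl
  · rw [bmap, EL_s_lt G e0 n (j := i.castSucc) i.isLt, AH_s_inr]
    exact congrArg Sum.inr (Fin.ext (by simp))

lemma s_bmap' (y) : (AH G e0 n).s (bmap' G e0 n y) = (EL G e0 n).s y := by
  conv_rhs => rw [← bmap_bmap' G e0 n y, s_bmap]

lemma r_castSucc (i : Fin n) :
    (EL G e0 n).r (Sum.inr i.castSucc) = (AH G e0 n).r (Sum.inr i) := by
  by_cases hi : (i : ℕ) = 0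
  · rw [EL_r_zero G e0 n (by simpa using hi), AH_r_zero G e0 n hi]
  · obtain ⟨k, hk⟩ := Nat.exists_eq_succ_of_ne_zero hi
    have hkn : k < n := lt_trans (hk ▸ Nat.lt_succ_self k) (hk ▸ i.isLt)
    rw [EL_r_succ G e0 n (by simpa using hk) hkn, AH_r_succ G e0 n hk hkn]

lemma s_castSucc (i : Fin n) :
    (EL G e0 n).s (Sum.inr i.castSucc) = Sum.inr i := by
  rw [EL_s_lt G e0 n (j := i.castSucc) i.isLt]
  exact congrArg Sum.inr (Fin.ext (by simp))

/-! ### The forward map φ -/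

def Phi0 : Gen (AH G e0 n) → LPA R (EL G e0 n)
  | .vert v => Vq R _ v
  | .edge (Sum.inl e) => if h : e = e0 then P R G e0 n n else Eq' R _ (Sum.inl ⟨e, h⟩)
  | .edge (Sum.inr i) => Eq' R _ (Sum.inr i.castSucc)
  | .ghost (Sum.inl e) => if h : e = e0 then Pg R G e0 n n else Gq R _ (Sum.inl ⟨e, h⟩)
  | .ghost (Sum.inr i) => Gq R _ (Sum.inr i.castSucc)

def PhiF : FA R (AH G e0 n) →ₐ[R] LPA R (EL G e0 n) := FreeAlgebra.lift R (Phi0 R G e0 n)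

@[simp] lemma PhiF_gv (v) : PhiF R G e0 n (gv R _ v) = Vq R (EL G e0 n) v := by
  rw [PhiF, gv, FreeAlgebra.lift_ι_apply]; rfl

@[simp] lemma PhiF_ge (x) : PhiF R G e0 n (ge R _ x) = Phi0 R G e0 n (.edge x) := by
  rw [PhiF, ge, FreeAlgebra.lift_ι_apply]

@[simp] lemma PhiF_gg (x) : PhiF R G e0 n (gg R _ x) = Phi0 R G e0 n (.ghost x) := by
  rw [PhiF, gg, FreeAlgebra.lift_ι_apply]

lemma vstop_mul_P : Vq R _ (Sum.inl (G.s e0)) * P R G e0 n n = P R G e0 n n := by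
  have hs : (EL G e0 n).s (hidx G e0 n n) = Sum.inl (G.s e0) := by
    rw [hidx_eq G e0 n le_rfl]; exact EL_s_top G e0 n rfl
  cases n with
  | zero => rw [P, ← hs, se]
  | succ m => rw [P, ← mul_assoc, ← hs, se]

lemma Pg_mul_vstop : Pg R G e0 n n * Vq R _ (Sum.inl (G.s e0)) = Pg R G e0 n n := by
  have hs : (EL G e0 n).s (hidx G e0 n n) = Sum.inl (G.s e0) := by
    rw [hidx_eq G e0 n le_rfl]; exact EL_s_top G e0 n rfl
  cases n with
  | zero => rw [Pg, ← hs, gs]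
  | succ m => rw [Pg, mul_assoc, ← hs, gs]

lemma Pg_mul_Eqinl (x) : ∀ k, Pg R G e0 n k * Eq' R (EL G e0 n) (Sum.inl x) = 0
  | 0 => ck1_ne R _ (by simp [hidx])
  | k+1 => by
    rw [Pg, mul_assoc, ck1_ne R _ (by simp [hidx]), mul_zero]

lemma Gqinl_mul_P (x) : ∀ k, Gq R (EL G e0 n) (Sum.inl x) * P R G e0 n k = 0
  | 0 => ck1_ne R _ (by simp [hidx])
  | k+1 => by
    rw [P, ← mul_assoc, ck1_ne R _ (by simp [hidx]), zero_mul]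

lemma Pgn_mul_Eqinr {j : Fin (n+1)} (hj : (j : ℕ) ≠ n) :
    Pg R G e0 n n * Eq' R (EL G e0 n) (Sum.inr j) = 0 := by
  have hne : hidx G e0 n n ≠ Sum.inr j := by
    rw [hidx_eq G e0 n le_rfl]
    intro hc
    exact hj (congrArg Fin.val (Sum.inr_injective hc)).symm
  cases n with
  | zero => rw [Pg]; exact ck1_ne R _ hne
  | succ m => rw [Pg, mul_assoc, ck1_ne R _ hne, mul_zero]

lemma Gqinr_mul_Pn {j : Fin (n+1)} (hj : (j : ℕ) ≠ n) :
    Gq R (EL G e0 n) (Sum.inr j) * P R G e0 n n = 0 := by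
  have hne : Sum.inr j ≠ hidx G e0 n n := by
    rw [hidx_eq G e0 n le_rfl]
    intro hc
    exact hj (congrArg Fin.val (Sum.inr_injective hc))
  cases n with
  | zero => rw [P]; exact ck1_ne R _ hne
  | succ m => rw [P, ← mul_assoc, ck1_ne R _ hne, zero_mul]

variable (hn : 0 < n)
include hn

lemma Pn_mul_Pgn :
    P R G e0 n n * Pg R G e0 n n =
      Eq' R (EL G e0 n) (Sum.inr ⟨n, n.lt_succ_self⟩) *
        Gq R (EL G e0 n) (Sum.inr ⟨n, n.lt_succ_self⟩) := by
  obtain ⟨m, rfl⟩ := Nat.exists_eq_succ_of_ne_zero hn.ne'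
  rw [P_succ_mul_Pg_succ R G e0 (m+1) (Nat.lt_succ_self m), hidx_eq G e0 (m+1) le_rfl]

lemma Phi_summand (x : (AH G e0 n).E) :
    Phi0 R G e0 n (.edge x) * Phi0 R G e0 n (.ghost x) =
      Eq' R (EL G e0 n) (bmap G e0 n x) * Gq R (EL G e0 n) (bmap G e0 n x) := by
  rcases x with e | i
  · by_cases h : e = e0
    · rw [Phi0, Phi0, bmap, dif_pos h, dif_pos h, dif_pos h]
      exact Pn_mul_Pgn R G e0 n hn
    · rw [Phi0, Phi0, bmap, dif_neg h, dif_neg h, dif_neg h]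
  · rfl

omit hn in
lemma sum_bmap (v : (AH G e0 n).V) (h : IsRegular (AH G e0 n) v) :
    (h.1.toFinset.sum fun x => Eq' R (EL G e0 n) (bmap G e0 n x) *
        Gq R (EL G e0 n) (bmap G e0 n x)) = Vq R (EL G e0 n) v := by
  have hset : {y | (EL G e0 n).s y = v} = bmap G e0 n '' {x | (AH G e0 n).s x = v} := by
    ext y
    constructor
    · intro hy
      exact ⟨bmap' G e0 n y, by rw [Set.mem_setOf_eq, s_bmap']; exact hy,
        bmap_bmap' G e0 n y⟩
    · rintro ⟨x, hx, rfl⟩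
      rw [Set.mem_setOf_eq, s_bmap]; exact hx
  have hreg : IsRegular (EL G e0 n) v :=
    ⟨hset ▸ h.1.image _, hset ▸ h.2.image _⟩
  have htf : hreg.1.toFinset = h.1.toFinset.image (bmap G e0 n) := by
    ext y
    simp only [Set.Finite.mem_toFinset, Finset.mem_image]
    rw [hset]
    constructor
    · rintro ⟨x, hx, rfl⟩; exact ⟨x, by simpa using hx, rfl⟩
    · rintro ⟨x, hx, rfl⟩; exact ⟨x, by simpa using hx, rfl⟩
  have := ck2 R (EL G e0 n) v hreg
  rw [htf, Finset.sum_image (fun a _ b _ hab => bmap_inj G e0 n hab)] at this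
  exact this

end Helper
namespace Helper

variable (R : Type) [CommRing R] (G : DGraph) (e0 : G.E) (n : ℕ)

open scoped Classical

lemma Phi0_e0 : Phi0 R G e0 n (.edge (Sum.inl e0)) = P R G e0 n n := by
  simp [Phi0]

lemma Phi0_g_e0 : Phi0 R G e0 n (.ghost (Sum.inl e0)) = Pg R G e0 n n := by
  simp [Phi0]

lemma Phi0_inl {e : G.E} (h : e ≠ e0) :
    Phi0 R G e0 n (.edge (Sum.inl e)) = Eq' R (EL G e0 n) (Sum.inl ⟨e, h⟩) := by
  simp [Phi0, h]

lemma Phi0_g_inl {e : G.E} (h : e ≠ e0) :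
    Phi0 R G e0 n (.ghost (Sum.inl e)) = Gq R (EL G e0 n) (Sum.inl ⟨e, h⟩) := by
  simp [Phi0, h]

lemma Phi0_inr (i : Fin n) :
    Phi0 R G e0 n (.edge (Sum.inr i)) = Eq' R (EL G e0 n) (Sum.inr i.castSucc) := rfl

lemma Phi0_g_inr (i : Fin n) :
    Phi0 R G e0 n (.ghost (Sum.inr i)) = Gq R (EL G e0 n) (Sum.inr i.castSucc) := rfl

lemma EL_ck2_cs (i : Fin n) :
    Eq' R (EL G e0 n) (Sum.inr i.castSucc) * Gq R (EL G e0 n) (Sum.inr i.castSucc) =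
      Vq R (EL G e0 n) (Sum.inr i) := by
  have h1 : (Sum.inr i.castSucc : (EL G e0 n).E) =
      Sum.inr ⟨(i : ℕ), Nat.lt_succ_of_le i.isLt.le⟩ := congrArg Sum.inr (Fin.ext (by simp))
  have h2 : (Sum.inr i : (EL G e0 n).V) = Sum.inr ⟨(i : ℕ), i.isLt⟩ :=
    congrArg Sum.inr (Fin.ext rfl)
  rw [h1, h2]
  exact EL_ck2_inr R G e0 n i.isLt

variable (hn : 0 < n)
include hn

theorem Phi_rel : ∀ ⦃x y⦄, LRel R (AH G e0 n) x y →
    PhiF R G e0 n x = PhiF R G e0 n y := by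
  intro x y h
  induction h with
  | vmul u v =>
    simp only [apply_ite (PhiF R G e0 n), map_zero, map_mul, PhiF_gv]
    by_cases huv : u = v
    · subst huv; rw [if_pos rfl, Vq_mul_self]
    · rw [if_neg huv]; exact Vq_mul_ne R (EL G e0 n) huv
  | se e =>
    rw [map_mul, PhiF_gv, PhiF_ge]
    rcases e with a | i
    · by_cases h : a = e0
      · rw [h, Phi0_e0]; exact vstop_mul_P R G e0 n
      · rw [Phi0_inl R G e0 n h]; exact se R (EL G e0 n) (Sum.inl ⟨a, h⟩)
    · rw [Phi0_inr, show (AH G e0 n).s (Sum.inr i) = (EL G e0 n).s (Sum.inr i.castSucc) from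
        (s_castSucc G e0 n i).symm]
      exact se R (EL G e0 n) (Sum.inr i.castSucc)
  | er e =>
    rw [map_mul, PhiF_gv, PhiF_ge]
    rcases e with a | i
    · by_cases h : a = e0
      · rw [h, Phi0_e0]; exact P_mul_vr R G e0 n n
      · rw [Phi0_inl R G e0 n h]; exact er R (EL G e0 n) (Sum.inl ⟨a, h⟩)
    · rw [Phi0_inr, show (AH G e0 n).r (Sum.inr i) = (EL G e0 n).r (Sum.inr i.castSucc) from
        (r_castSucc G e0 n i).symm]
      exact er R (EL G e0 n) (Sum.inr i.castSucc)
  | rg e =>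
    rw [map_mul, PhiF_gv, PhiF_gg]
    rcases e with a | i
    · by_cases h : a = e0
      · rw [h, Phi0_g_e0]; exact vr_mul_Pg R G e0 n n
      · rw [Phi0_g_inl R G e0 n h]; exact rg R (EL G e0 n) (Sum.inl ⟨a, h⟩)
    · rw [Phi0_g_inr, show (AH G e0 n).r (Sum.inr i) = (EL G e0 n).r (Sum.inr i.castSucc) from
        (r_castSucc G e0 n i).symm]
      exact rg R (EL G e0 n) (Sum.inr i.castSucc)
  | gs e =>
    rw [map_mul, PhiF_gv, PhiF_gg]
    rcases e with a | i
    · by_cases h : a = e0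
      · rw [h, Phi0_g_e0]; exact Pg_mul_vstop R G e0 n
      · rw [Phi0_g_inl R G e0 n h]; exact gs R (EL G e0 n) (Sum.inl ⟨a, h⟩)
    · rw [Phi0_g_inr, show (AH G e0 n).s (Sum.inr i) = (EL G e0 n).s (Sum.inr i.castSucc) from
        (s_castSucc G e0 n i).symm]
      exact gs R (EL G e0 n) (Sum.inr i.castSucc)
  | ck1 e f =>
    rw [apply_ite (PhiF R G e0 n), map_zero, map_mul, PhiF_gv, PhiF_ge, PhiF_gg]
    rcases e with a | i <;> rcases f with b | i'
    · by_cases ha : a = e0 <;> by_cases hb : b = e0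
      · rw [ha, hb, if_pos rfl, Phi0_g_e0, Phi0_e0]
        exact Pg_mul_P R G e0 n n le_rfl
      · rw [ha, if_neg (fun hc => hb (Sum.inl_injective hc).symm), Phi0_g_e0, Phi0_inl R G e0 n hb]
        exact Pg_mul_Eqinl R G e0 n _ n
      · rw [hb, if_neg (fun hc => ha (Sum.inl_injective hc)), Phi0_g_inl R G e0 n ha, Phi0_e0]
        exact Gqinl_mul_P R G e0 n _ n
      · by_cases hab : a = b
        · subst hab
          rw [if_pos rfl, Phi0_g_inl R G e0 n ha, Phi0_inl R G e0 n ha]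
          exact ck1_self R (EL G e0 n) (Sum.inl ⟨a, ha⟩)
        · rw [if_neg (fun hc => hab (Sum.inl_injective hc)), Phi0_g_inl R G e0 n ha,
            Phi0_inl R G e0 n hb]
          exact ck1_ne R _
            (fun hc => hab (congrArg Subtype.val (Sum.inl_injective hc)))
    · rw [if_neg (by simp), Phi0_inr]
      by_cases ha : a = e0
      · rw [ha, Phi0_g_e0]
        exact Pgn_mul_Eqinr R G e0 n (j := i'.castSucc) (by simpa using Nat.ne_of_lt i'.isLt)
      · rw [Phi0_g_inl R G e0 n ha]
        exact ck1_ne R _ (by simp)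
    · rw [if_neg (by simp), Phi0_g_inr]
      by_cases hb : b = e0
      · rw [hb, Phi0_e0]
        exact Gqinr_mul_Pn R G e0 n (j := i.castSucc) (by simpa using Nat.ne_of_lt i.isLt)
      · rw [Phi0_inl R G e0 n hb]
        exact ck1_ne R _ (by simp)
    · by_cases hii : i = i'
      · subst hii
        rw [if_pos rfl, Phi0_g_inr, Phi0_inr,
          show (AH G e0 n).r (Sum.inr i) = (EL G e0 n).r (Sum.inr i.castSucc) from
            (r_castSucc G e0 n i).symm]
        exact ck1_self R (EL G e0 n) (Sum.inr i.castSucc)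
      · rw [if_neg (fun hc => hii (Sum.inr_injective hc)), Phi0_g_inr, Phi0_inr]
        exact ck1_ne R _
          (fun hc => hii (Fin.castSucc_injective n (Sum.inr_injective hc)))
  | ck2 v h =>
    rw [map_sum, PhiF_gv]
    have hterm : ∀ x ∈ h.1.toFinset,
        PhiF R G e0 n (ge R (AH G e0 n) x * gg R (AH G e0 n) x) =
          Eq' R (EL G e0 n) (bmap G e0 n x) * Gq R (EL G e0 n) (bmap G e0 n x) := by
      intro x _
      rw [map_mul, PhiF_ge, PhiF_gg]
      exact Phi_summand R G e0 n hn x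
    rw [Finset.sum_congr rfl hterm]
    rcases v with w | i
    · exact sum_bmap R G e0 n _ h
    · have htf : h.1.toFinset = {Sum.inr i} := by
        ext f
        simp only [Set.Finite.mem_toFinset, Finset.mem_singleton, Set.mem_setOf_eq]
        exact ⟨AH_unique_src G e0 n i f, by rintro rfl; exact AH_s_inr G e0 n i⟩
      rw [htf, Finset.sum_singleton,
        show bmap G e0 n (Sum.inr i) = Sum.inr i.castSucc from rfl]
      exact EL_ck2_cs R G e0 n i

def PhiH : LPA R (AH G e0 n) →ₐ[R] LPA R (EL G e0 n) :=
  RingQuot.liftAlgHom R ⟨PhiF R G e0 n, Phi_rel R G e0 n hn⟩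

end Helper
namespace Helper

variable (R : Type) [CommRing R] (G : DGraph) (e0 : G.E) (n : ℕ)

open scoped Classical

variable (hn : 0 < n)

lemma pred_lt (hn : 0 < n) : n - 1 < n := Nat.sub_lt hn one_pos

/-- `ψ(e_n) = e₀ f₀* f₁* ⋯ f_{n-1}*`. -/
def QE : LPA R (AH G e0 n) :=
  Eq' R _ (Sum.inl e0) * Qg R G e0 n hn (n-1)

/-- `ψ(e_n*) = f_{n-1} ⋯ f₀ e₀*`. -/
def QG : LPA R (AH G e0 n) :=
  Qf R G e0 n hn (n-1) * Gq R _ (Sum.inl e0)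

lemma er_e0 : Eq' R (AH G e0 n) (Sum.inl e0) * Vq R _ (Sum.inl (G.r e0)) =
    Eq' R (AH G e0 n) (Sum.inl e0) := by
  have := er R (AH G e0 n) (Sum.inl e0)
  rwa [AH_r_inl] at this

lemma rg_e0 : Vq R (AH G e0 n) (Sum.inl (G.r e0)) * Gq R _ (Sum.inl e0) =
    Gq R (AH G e0 n) (Sum.inl e0) := by
  have := rg R (AH G e0 n) (Sum.inl e0)
  rwa [AH_r_inl] at this

lemma se_e0 : Vq R (AH G e0 n) (Sum.inl (G.s e0)) * Eq' R _ (Sum.inl e0) =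
    Eq' R (AH G e0 n) (Sum.inl e0) := by
  have := se R (AH G e0 n) (Sum.inl e0)
  rwa [AH_s_inl] at this

lemma gs_e0 : Gq R (AH G e0 n) (Sum.inl e0) * Vq R _ (Sum.inl (G.s e0)) =
    Gq R (AH G e0 n) (Sum.inl e0) := by
  have := gs R (AH G e0 n) (Sum.inl e0)
  rwa [AH_s_inl] at this

lemma ck1_e0 : Gq R (AH G e0 n) (Sum.inl e0) * Eq' R _ (Sum.inl e0) =
    Vq R (AH G e0 n) (Sum.inl (G.r e0)) := by
  have := ck1_self R (AH G e0 n) (Sum.inl e0)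
  rwa [AH_r_inl] at this

lemma QE_mul_QG :
    QE R G e0 n hn * QG R G e0 n hn =
      Eq' R (AH G e0 n) (Sum.inl e0) * Gq R (AH G e0 n) (Sum.inl e0) := by
  rw [QE, QG]
  calc Eq' R _ (Sum.inl e0) * Qg R G e0 n hn (n-1) *
        (Qf R G e0 n hn (n-1) * Gq R _ (Sum.inl e0))
      = Eq' R _ (Sum.inl e0) * (Qg R G e0 n hn (n-1) * Qf R G e0 n hn (n-1))
          * Gq R _ (Sum.inl e0) := by simp only [mul_assoc]
    _ = Eq' R _ (Sum.inl e0) * Vq R _ (Sum.inl (G.r e0)) * Gq R _ (Sum.inl e0) := by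
          rw [Qg_mul_Qf R G e0 n hn (n-1) (pred_lt n hn)]
    _ = _ := by rw [er_e0]

lemma QG_mul_QE :
    QG R G e0 n hn * QE R G e0 n hn = Vq R (AH G e0 n) (Sum.inr ⟨n-1, pred_lt n hn⟩) := by
  rw [QE, QG]
  calc Qf R G e0 n hn (n-1) * Gq R _ (Sum.inl e0) *
        (Eq' R _ (Sum.inl e0) * Qg R G e0 n hn (n-1))
      = Qf R G e0 n hn (n-1) * (Gq R _ (Sum.inl e0) * Eq' R _ (Sum.inl e0))
          * Qg R G e0 n hn (n-1) := by simp only [mul_assoc]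
    _ = Qf R G e0 n hn (n-1) * Vq R _ (Sum.inl (G.r e0)) * Qg R G e0 n hn (n-1) := by
          rw [ck1_e0]
    _ = Qf R G e0 n hn (n-1) * Qg R G e0 n hn (n-1) := by
          rw [Qf_mul_vr R G e0 n hn (n-1)]
    _ = _ := Qf_mul_Qg R G e0 n hn (n-1) (pred_lt n hn)

/-! ### The reverse map ψ -/

def Psi0 : Gen (EL G e0 n) → LPA R (AH G e0 n)
  | .vert v => Vq R _ v
  | .edge (Sum.inl e) => Eq' R _ (Sum.inl e.1)
  | .edge (Sum.inr j) =>
      if h : (j : ℕ) = n then QE R G e0 n hn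
      else Eq' R _ (Sum.inr ⟨j, lt_of_le_of_ne (Nat.lt_succ_iff.mp j.isLt) h⟩)
  | .ghost (Sum.inl e) => Gq R _ (Sum.inl e.1)
  | .ghost (Sum.inr j) =>
      if h : (j : ℕ) = n then QG R G e0 n hn
      else Gq R _ (Sum.inr ⟨j, lt_of_le_of_ne (Nat.lt_succ_iff.mp j.isLt) h⟩)

def PsiF : FA R (EL G e0 n) →ₐ[R] LPA R (AH G e0 n) :=
  FreeAlgebra.lift R (Psi0 R G e0 n hn)

@[simp] lemma PsiF_gv (v) : PsiF R G e0 n hn (gv R _ v) = Vq R (AH G e0 n) v := by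
  rw [PsiF, gv, FreeAlgebra.lift_ι_apply]; rfl

@[simp] lemma PsiF_ge (x) : PsiF R G e0 n hn (ge R _ x) = Psi0 R G e0 n hn (.edge x) := by
  rw [PsiF, ge, FreeAlgebra.lift_ι_apply]

@[simp] lemma PsiF_gg (x) : PsiF R G e0 n hn (gg R _ x) = Psi0 R G e0 n hn (.ghost x) := by
  rw [PsiF, gg, FreeAlgebra.lift_ι_apply]

lemma Psi0_inl (e) : Psi0 R G e0 n hn (.edge (Sum.inl e)) = Eq' R (AH G e0 n) (Sum.inl e.1) :=
  rfl

lemma Psi0_g_inl (e) :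
    Psi0 R G e0 n hn (.ghost (Sum.inl e)) = Gq R (AH G e0 n) (Sum.inl e.1) := rfl

lemma Psi0_top {j : Fin (n+1)} (hj : (j : ℕ) = n) :
    Psi0 R G e0 n hn (.edge (Sum.inr j)) = QE R G e0 n hn := by
  simp [Psi0, hj]

lemma Psi0_g_top {j : Fin (n+1)} (hj : (j : ℕ) = n) :
    Psi0 R G e0 n hn (.ghost (Sum.inr j)) = QG R G e0 n hn := by
  simp [Psi0, hj]

lemma Psi0_low {j : Fin (n+1)} (hj : (j : ℕ) < n) :
    Psi0 R G e0 n hn (.edge (Sum.inr j)) = Eq' R (AH G e0 n) (Sum.inr ⟨j, hj⟩) := by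
  simp [Psi0, Nat.ne_of_lt hj]

lemma Psi0_g_low {j : Fin (n+1)} (hj : (j : ℕ) < n) :
    Psi0 R G e0 n hn (.ghost (Sum.inr j)) = Gq R (AH G e0 n) (Sum.inr ⟨j, hj⟩) := by
  simp [Psi0, Nat.ne_of_lt hj]

lemma r_low {j : Fin (n+1)} (hj : (j : ℕ) < n) :
    (EL G e0 n).r (Sum.inr j) = (AH G e0 n).r (Sum.inr ⟨j, hj⟩) := by
  have h1 : ((⟨(j : ℕ), hj⟩ : Fin n).castSucc : Fin (n+1)) = j := Fin.ext (by simp)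
  have := r_castSucc G e0 n ⟨(j : ℕ), hj⟩
  rwa [h1] at this

lemma s_low {j : Fin (n+1)} (hj : (j : ℕ) < n) :
    (EL G e0 n).s (Sum.inr j) = Sum.inr ⟨(j : ℕ), hj⟩ := EL_s_lt G e0 n hj

lemma Psi_summand (y : (EL G e0 n).E) :
    Psi0 R G e0 n hn (.edge y) * Psi0 R G e0 n hn (.ghost y) =
      Eq' R (AH G e0 n) (bmap' G e0 n y) * Gq R (AH G e0 n) (bmap' G e0 n y) := by
  rcases y with e | j
  · rfl
  · by_cases hj : (j : ℕ) = n
    · rw [Psi0_top R G e0 n hn hj, Psi0_g_top R G e0 n hn hj, bmap', dif_pos hj]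
      exact QE_mul_QG R G e0 n hn
    · have hj' : (j : ℕ) < n := lt_of_le_of_ne (Nat.lt_succ_iff.mp j.isLt) hj
      rw [Psi0_low R G e0 n hn hj', Psi0_g_low R G e0 n hn hj', bmap', dif_neg hj]

lemma sum_bmap' (v : (EL G e0 n).V) (h : IsRegular (EL G e0 n) v) :
    (h.1.toFinset.sum fun y => Eq' R (AH G e0 n) (bmap' G e0 n y) *
        Gq R (AH G e0 n) (bmap' G e0 n y)) = Vq R (AH G e0 n) v := by
  have hset : {x | (AH G e0 n).s x = v} = bmap' G e0 n '' {y | (EL G e0 n).s y = v} := by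
    ext x
    constructor
    · intro hx
      exact ⟨bmap G e0 n x, by rw [Set.mem_setOf_eq, s_bmap]; exact hx,
        bmap'_bmap G e0 n x⟩
    · rintro ⟨y, hy, rfl⟩
      rw [Set.mem_setOf_eq, s_bmap']; exact hy
  have hreg : IsRegular (AH G e0 n) v :=
    ⟨hset ▸ h.1.image _, hset ▸ h.2.image _⟩
  have htf : hreg.1.toFinset = h.1.toFinset.image (bmap' G e0 n) := by
    ext x
    simp only [Set.Finite.mem_toFinset, Finset.mem_image]
    rw [hset]
    constructor
    · rintro ⟨y, hy, rfl⟩; exact ⟨y, by simpa using hy, rfl⟩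
    · rintro ⟨y, hy, rfl⟩; exact ⟨y, by simpa using hy, rfl⟩
  have := ck2 R (AH G e0 n) v hreg
  rw [htf, Finset.sum_image (fun a _ b _ hab => bmap'_inj G e0 n hab)] at this
  exact this

theorem Psi_rel : ∀ ⦃x y⦄, LRel R (EL G e0 n) x y →
    PsiF R G e0 n hn x = PsiF R G e0 n hn y := by
  intro x y h
  induction h with
  | vmul u v =>
    simp only [apply_ite (PsiF R G e0 n hn), map_zero, map_mul, PsiF_gv]
    by_cases huv : u = v
    · subst huv; rw [if_pos rfl, Vq_mul_self]
    · rw [if_neg huv]; exact Vq_mul_ne R (AH G e0 n) huv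
  | se e =>
    rw [map_mul, PsiF_gv, PsiF_ge]
    rcases e with a | j
    · rw [Psi0_inl]
      have := se R (AH G e0 n) (Sum.inl a.1)
      rwa [AH_s_inl] at this
    · by_cases hj : (j : ℕ) = n
      · rw [Psi0_top R G e0 n hn hj, EL_s_top G e0 n hj, QE, ← mul_assoc, se_e0]
      · have hj' : (j : ℕ) < n := lt_of_le_of_ne (Nat.lt_succ_iff.mp j.isLt) hj
        rw [Psi0_low R G e0 n hn hj', s_low G e0 n hj', ← AH_s_inr G e0 n ⟨(j : ℕ), hj'⟩]
        exact se R (AH G e0 n) _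
  | er e =>
    rw [map_mul, PsiF_gv, PsiF_ge]
    rcases e with a | j
    · rw [Psi0_inl]
      have := er R (AH G e0 n) (Sum.inl a.1)
      rwa [AH_r_inl] at this
    · by_cases hj : (j : ℕ) = n
      · have hr : (EL G e0 n).r (Sum.inr j) = Sum.inr ⟨n-1, pred_lt n hn⟩ := by
          refine EL_r_succ G e0 n ?_ (pred_lt n hn)
          rw [hj]; exact (Nat.succ_pred_eq_of_pos hn).symm
        rw [Psi0_top R G e0 n hn hj, hr, QE, mul_assoc,
          Qg_mul_vs R G e0 n hn (pred_lt n hn)]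
      · have hj' : (j : ℕ) < n := lt_of_le_of_ne (Nat.lt_succ_iff.mp j.isLt) hj
        rw [Psi0_low R G e0 n hn hj', r_low G e0 n hj']
        exact er R (AH G e0 n) _
  | rg e =>
    rw [map_mul, PsiF_gv, PsiF_gg]
    rcases e with a | j
    · rw [Psi0_g_inl]
      have := rg R (AH G e0 n) (Sum.inl a.1)
      rwa [AH_r_inl] at this
    · by_cases hj : (j : ℕ) = n
      · have hr : (EL G e0 n).r (Sum.inr j) = Sum.inr ⟨n-1, pred_lt n hn⟩ := by
          refine EL_r_succ G e0 n ?_ (pred_lt n hn)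
          rw [hj]; exact (Nat.succ_pred_eq_of_pos hn).symm
        rw [Psi0_g_top R G e0 n hn hj, hr, QG, ← mul_assoc,
          vs_mul_Qf R G e0 n hn (pred_lt n hn)]
      · have hj' : (j : ℕ) < n := lt_of_le_of_ne (Nat.lt_succ_iff.mp j.isLt) hj
        rw [Psi0_g_low R G e0 n hn hj', r_low G e0 n hj']
        exact rg R (AH G e0 n) _
  | gs e =>
    rw [map_mul, PsiF_gv, PsiF_gg]
    rcases e with a | j
    · rw [Psi0_g_inl]
      have := gs R (AH G e0 n) (Sum.inl a.1)
      rwa [AH_s_inl] at this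
    · by_cases hj : (j : ℕ) = n
      · rw [Psi0_g_top R G e0 n hn hj, EL_s_top G e0 n hj, QG, mul_assoc, gs_e0]
      · have hj' : (j : ℕ) < n := lt_of_le_of_ne (Nat.lt_succ_iff.mp j.isLt) hj
        rw [Psi0_g_low R G e0 n hn hj', s_low G e0 n hj',
          ← AH_s_inr G e0 n ⟨(j : ℕ), hj'⟩]
        exact gs R (AH G e0 n) _
  | ck1 e f =>
    rw [apply_ite (PsiF R G e0 n hn), map_zero, map_mul, PsiF_gv, PsiF_ge, PsiF_gg]
    rcases e with a | j <;> rcases f with b | j'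
    · by_cases hab : a = b
      · subst hab
        rw [if_pos rfl, Psi0_g_inl, Psi0_inl]
        have := ck1_self R (AH G e0 n) (Sum.inl a.1)
        rwa [AH_r_inl] at this
      · rw [if_neg (fun hc => hab (Sum.inl_injective hc)), Psi0_g_inl, Psi0_inl]
        exact ck1_ne R _
          (fun hc => hab (Subtype.coe_injective (Sum.inl_injective hc)))
    · rw [if_neg (by rintro ⟨⟩), Psi0_g_inl]
      by_cases hj : (j' : ℕ) = n
      · rw [Psi0_top R G e0 n hn hj, QE, ← mul_assoc,
          ck1_ne R _ (fun hc => a.2 (Sum.inl_injective hc)), zero_mul]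
      · have hj' : (j' : ℕ) < n := lt_of_le_of_ne (Nat.lt_succ_iff.mp j'.isLt) hj
        rw [Psi0_low R G e0 n hn hj']
        exact ck1_ne R _ (by rintro ⟨⟩)
    · rw [if_neg (by rintro ⟨⟩), Psi0_inl]
      by_cases hj : (j : ℕ) = n
      · rw [Psi0_g_top R G e0 n hn hj, QG, mul_assoc,
          ck1_ne R _ (fun hc => b.2 (Sum.inl_injective hc).symm), mul_zero]
      · have hj' : (j : ℕ) < n := lt_of_le_of_ne (Nat.lt_succ_iff.mp j.isLt) hj
        rw [Psi0_g_low R G e0 n hn hj']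
        exact ck1_ne R _ (by rintro ⟨⟩)
    · by_cases hj : (j : ℕ) = n <;> by_cases hj' : (j' : ℕ) = n
      · have hjj : j = j' := Fin.ext (by rw [hj, hj'])
        subst hjj
        rw [if_pos rfl, Psi0_g_top R G e0 n hn hj, Psi0_top R G e0 n hn hj]
        have hr : (EL G e0 n).r (Sum.inr j) = Sum.inr ⟨n-1, pred_lt n hn⟩ := by
          refine EL_r_succ G e0 n ?_ (pred_lt n hn)
          rw [hj]; exact (Nat.succ_pred_eq_of_pos hn).symm
        rw [hr]
        exact QG_mul_QE R G e0 n hn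
      · have hlt : (j' : ℕ) < n := lt_of_le_of_ne (Nat.lt_succ_iff.mp j'.isLt) hj'
        rw [if_neg (fun hc => hj' (by rw [← congrArg Fin.val (Sum.inr_injective hc), hj])),
          Psi0_g_top R G e0 n hn hj, Psi0_low R G e0 n hn hlt, QG, mul_assoc,
          ck1_ne R _ (by rintro ⟨⟩), mul_zero]
      · have hlt : (j : ℕ) < n := lt_of_le_of_ne (Nat.lt_succ_iff.mp j.isLt) hj
        rw [if_neg (fun hc => hj (by rw [congrArg Fin.val (Sum.inr_injective hc), hj'])),
          Psi0_g_low R G e0 n hn hlt, Psi0_top R G e0 n hn hj', QE, ← mul_assoc,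
          ck1_ne R _ (by rintro ⟨⟩), zero_mul]
      · have hltj : (j : ℕ) < n := lt_of_le_of_ne (Nat.lt_succ_iff.mp j.isLt) hj
        have hltj' : (j' : ℕ) < n := lt_of_le_of_ne (Nat.lt_succ_iff.mp j'.isLt) hj'
        by_cases hjj : j = j'
        · subst hjj
          rw [if_pos rfl, Psi0_g_low R G e0 n hn hltj, Psi0_low R G e0 n hn hltj,
            r_low G e0 n hltj]
          exact ck1_self R (AH G e0 n) _
        · rw [if_neg (fun hc => hjj (Sum.inr_injective hc)),
            Psi0_g_low R G e0 n hn hltj, Psi0_low R G e0 n hn hltj']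
          refine ck1_ne R (AH G e0 n) fun hc => hjj ?_
          have h2 : (⟨(j : ℕ), hltj⟩ : Fin n) = ⟨(j' : ℕ), hltj'⟩ := Sum.inr_injective hc
          have h3 : (j : ℕ) = (j' : ℕ) := by simpa using h2
          exact Fin.ext h3
  | ck2 v h =>
    rw [map_sum, PsiF_gv]
    have hterm : ∀ y ∈ h.1.toFinset,
        PsiF R G e0 n hn (ge R (EL G e0 n) y * gg R (EL G e0 n) y) =
          Eq' R (AH G e0 n) (bmap' G e0 n y) * Gq R (AH G e0 n) (bmap' G e0 n y) := by
      intro y _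
      rw [map_mul, PsiF_ge, PsiF_gg]
      exact Psi_summand R G e0 n hn y
    rw [Finset.sum_congr rfl hterm]
    rcases v with w | i
    · exact sum_bmap' R G e0 n _ h
    · have htf : h.1.toFinset = {Sum.inr ⟨(i : ℕ), Nat.lt_succ_of_le i.isLt.le⟩} := by
        ext f
        simp only [Set.Finite.mem_toFinset, Finset.mem_singleton, Set.mem_setOf_eq]
        constructor
        · intro hf
          have := EL_unique_src G e0 n i.isLt f
          rw [show (⟨(i : ℕ), i.isLt⟩ : Fin n) = i from Fin.ext rfl] at this
          exact this hf
        · rintro rfl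
          exact EL_s_lt G e0 n i.isLt
      rw [htf, Finset.sum_singleton,
        show bmap' G e0 n (Sum.inr ⟨(i : ℕ), Nat.lt_succ_of_le i.isLt.le⟩) =
          Sum.inr ⟨(i : ℕ), i.isLt⟩ from by
            rw [bmap', dif_neg (Nat.ne_of_lt i.isLt)]]
      have := AH_ck2_inr R G e0 n ⟨(i : ℕ), i.isLt⟩
      rwa [show (⟨(i : ℕ), i.isLt⟩ : Fin n) = i from Fin.ext rfl] at this

def PsiH : LPA R (EL G e0 n) →ₐ[R] LPA R (AH G e0 n) :=
  RingQuot.liftAlgHom R ⟨PsiF R G e0 n hn, Psi_rel R G e0 n hn⟩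

end Helper
namespace Helper

variable (R : Type) [CommRing R] (G : DGraph) (e0 : G.E) (n : ℕ)

open scoped Classical

variable (hn : 0 < n)

lemma PhiH_Vq (v) : PhiH R G e0 n hn (Vq R (AH G e0 n) v) = Vq R (EL G e0 n) v := by
  rw [PhiH, Vq, RingQuot.liftAlgHom_mkAlgHom_apply]
  exact PhiF_gv R G e0 n v

lemma PhiH_Eq (x) : PhiH R G e0 n hn (Eq' R (AH G e0 n) x) = Phi0 R G e0 n (.edge x) := by
  rw [PhiH, Eq', RingQuot.liftAlgHom_mkAlgHom_apply]
  exact PhiF_ge R G e0 n x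

lemma PhiH_Gq (x) : PhiH R G e0 n hn (Gq R (AH G e0 n) x) = Phi0 R G e0 n (.ghost x) := by
  rw [PhiH, Gq, RingQuot.liftAlgHom_mkAlgHom_apply]
  exact PhiF_gg R G e0 n x

lemma PsiH_Vq (v) : PsiH R G e0 n hn (Vq R (EL G e0 n) v) = Vq R (AH G e0 n) v := by
  rw [PsiH, Vq, RingQuot.liftAlgHom_mkAlgHom_apply]
  exact PsiF_gv R G e0 n hn v

lemma PsiH_Eq (x) : PsiH R G e0 n hn (Eq' R (EL G e0 n) x) = Psi0 R G e0 n hn (.edge x) := by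
  rw [PsiH, Eq', RingQuot.liftAlgHom_mkAlgHom_apply]
  exact PsiF_ge R G e0 n hn x

lemma PsiH_Gq (x) : PsiH R G e0 n hn (Gq R (EL G e0 n) x) = Psi0 R G e0 n hn (.ghost x) := by
  rw [PsiH, Gq, RingQuot.liftAlgHom_mkAlgHom_apply]
  exact PsiF_gg R G e0 n hn x

lemma cs_eq {k : ℕ} (hk : k < n) :
    (Sum.inr (⟨k, hk⟩ : Fin n).castSucc : (EL G e0 n).E) = hidx G e0 n k := by
  rw [hidx_eq G e0 n hk.le]
  exact congrArg Sum.inr (Fin.ext (by simp))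

lemma PsiH_em {k : ℕ} (hk : k < n) :
    PsiH R G e0 n hn (Eq' R (EL G e0 n) (hidx G e0 n k)) =
      Eq' R (AH G e0 n) (aidx G e0 n hn k) := by
  rw [hidx_eq G e0 n hk.le, PsiH_Eq,
    Psi0_low R G e0 n hn (show ((⟨k, Nat.lt_succ_of_le hk.le⟩ : Fin (n+1)) : ℕ) < n from hk),
    aidx_eq G e0 n hn hk]

lemma PsiH_gm {k : ℕ} (hk : k < n) :
    PsiH R G e0 n hn (Gq R (EL G e0 n) (hidx G e0 n k)) =
      Gq R (AH G e0 n) (aidx G e0 n hn k) := by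
  rw [hidx_eq G e0 n hk.le, PsiH_Gq,
    Psi0_g_low R G e0 n hn (show ((⟨k, Nat.lt_succ_of_le hk.le⟩ : Fin (n+1)) : ℕ) < n from hk),
    aidx_eq G e0 n hn hk]

lemma PhiH_fm {k : ℕ} (hk : k < n) :
    PhiH R G e0 n hn (Eq' R (AH G e0 n) (aidx G e0 n hn k)) =
      Eq' R (EL G e0 n) (hidx G e0 n k) := by
  rw [aidx_eq G e0 n hn hk, PhiH_Eq, Phi0_inr, cs_eq G e0 n hk]

lemma PhiH_fgm {k : ℕ} (hk : k < n) :
    PhiH R G e0 n hn (Gq R (AH G e0 n) (aidx G e0 n hn k)) =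
      Gq R (EL G e0 n) (hidx G e0 n k) := by
  rw [aidx_eq G e0 n hn hk, PhiH_Gq, Phi0_g_inr, cs_eq G e0 n hk]

lemma PsiH_P : ∀ k, k < n → PsiH R G e0 n hn (P R G e0 n k) = Qf R G e0 n hn k
  | 0, hk => by rw [P, Qf, PsiH_em R G e0 n hn hk]
  | k+1, hk => by
    rw [P, Qf, map_mul, PsiH_em R G e0 n hn hk, PsiH_P k (Nat.lt_of_succ_lt hk)]

lemma PsiH_Pg : ∀ k, k < n → PsiH R G e0 n hn (Pg R G e0 n k) = Qg R G e0 n hn k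
  | 0, hk => by rw [Pg, Qg, PsiH_gm R G e0 n hn hk]
  | k+1, hk => by
    rw [Pg, Qg, map_mul, PsiH_gm R G e0 n hn hk, PsiH_Pg k (Nat.lt_of_succ_lt hk)]

lemma PhiH_Qf : ∀ k, k < n → PhiH R G e0 n hn (Qf R G e0 n hn k) = P R G e0 n k
  | 0, hk => by rw [P, Qf, PhiH_fm R G e0 n hn hk]
  | k+1, hk => by
    rw [P, Qf, map_mul, PhiH_fm R G e0 n hn hk, PhiH_Qf k (Nat.lt_of_succ_lt hk)]

lemma PhiH_Qg : ∀ k, k < n → PhiH R G e0 n hn (Qg R G e0 n hn k) = Pg R G e0 n k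
  | 0, hk => by rw [Pg, Qg, PhiH_fgm R G e0 n hn hk]
  | k+1, hk => by
    rw [Pg, Qg, map_mul, PhiH_fgm R G e0 n hn hk, PhiH_Qg k (Nat.lt_of_succ_lt hk)]

lemma PsiH_Pn : PsiH R G e0 n hn (P R G e0 n n) = Eq' R (AH G e0 n) (Sum.inl e0) := by
  obtain ⟨m, hm⟩ := Nat.exists_eq_succ_of_ne_zero hn.ne'
  have hmn : m < n := hm ▸ Nat.lt_succ_self m
  have h1 : P R G e0 n n = Eq' R (EL G e0 n) (hidx G e0 n n) * P R G e0 n m := by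
    rw [hm]; rfl
  have htop : Psi0 R G e0 n hn (.edge (hidx G e0 n n)) = QE R G e0 n hn := by
    rw [hidx_eq G e0 n le_rfl]
    exact Psi0_top R G e0 n hn rfl
  rw [h1, map_mul, PsiH_Eq, htop, PsiH_P R G e0 n hn m hmn, QE,
    show n - 1 = m from by rw [hm]; rfl, mul_assoc, Qg_mul_Qf R G e0 n hn m hmn, er_e0]

lemma PsiH_Pgn : PsiH R G e0 n hn (Pg R G e0 n n) = Gq R (AH G e0 n) (Sum.inl e0) := by
  obtain ⟨m, hm⟩ := Nat.exists_eq_succ_of_ne_zero hn.ne'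
  have hmn : m < n := hm ▸ Nat.lt_succ_self m
  have h1 : Pg R G e0 n n = Pg R G e0 n m * Gq R (EL G e0 n) (hidx G e0 n n) := by
    rw [hm]; rfl
  have htop : Psi0 R G e0 n hn (.ghost (hidx G e0 n n)) = QG R G e0 n hn := by
    rw [hidx_eq G e0 n le_rfl]
    exact Psi0_g_top R G e0 n hn rfl
  rw [h1, map_mul, PsiH_Gq, htop, PsiH_Pg R G e0 n hn m hmn, QG,
    show n - 1 = m from by rw [hm]; rfl, ← mul_assoc, Qg_mul_Qf R G e0 n hn m hmn, rg_e0]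

lemma hidx_top_r {m : ℕ} (hm : n = m + 1) (hmn : m < n) :
    (EL G e0 n).r (hidx G e0 n n) = Sum.inr ⟨m, hmn⟩ := by
  rw [hidx_eq G e0 n le_rfl]
  exact EL_r_succ G e0 n (by simpa using hm) hmn

lemma PhiH_QE : PhiH R G e0 n hn (QE R G e0 n hn) =
    Eq' R (EL G e0 n) (hidx G e0 n n) := by
  obtain ⟨m, hm⟩ := Nat.exists_eq_succ_of_ne_zero hn.ne'
  have hmn : m < n := hm ▸ Nat.lt_succ_self m
  have h1 : P R G e0 n n = Eq' R (EL G e0 n) (hidx G e0 n n) * P R G e0 n m := by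
    rw [hm]; rfl
  rw [QE, map_mul, PhiH_Eq, Phi0_e0, show n - 1 = m from by rw [hm]; rfl,
    PhiH_Qg R G e0 n hn m hmn, h1, mul_assoc, P_mul_Pg R G e0 n m hmn,
    ← hidx_top_r G e0 n hm hmn, er]

lemma PhiH_QG : PhiH R G e0 n hn (QG R G e0 n hn) =
    Gq R (EL G e0 n) (hidx G e0 n n) := by
  obtain ⟨m, hm⟩ := Nat.exists_eq_succ_of_ne_zero hn.ne'
  have hmn : m < n := hm ▸ Nat.lt_succ_self m
  have h1 : Pg R G e0 n n = Pg R G e0 n m * Gq R (EL G e0 n) (hidx G e0 n n) := by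
    rw [hm]; rfl
  rw [QG, map_mul, PhiH_Gq, Phi0_g_e0, show n - 1 = m from by rw [hm]; rfl,
    PhiH_Qf R G e0 n hn m hmn, h1, ← mul_assoc, P_mul_Pg R G e0 n m hmn,
    ← hidx_top_r G e0 n hm hmn, rg]

lemma psi_phi : (PsiH R G e0 n hn).comp (PhiH R G e0 n hn) =
    AlgHom.id R (LPA R (AH G e0 n)) := by
  have h1 : ((PsiH R G e0 n hn).comp (PhiH R G e0 n hn)).comp
        (RingQuot.mkAlgHom R (LRel R (AH G e0 n))) =
      (AlgHom.id R (LPA R (AH G e0 n))).comp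
        (RingQuot.mkAlgHom R (LRel R (AH G e0 n))) := by
    apply FreeAlgebra.hom_ext
    funext g
    simp only [Function.comp_apply, AlgHom.coe_comp, AlgHom.coe_id, id_eq]
    cases g with
    | vert v =>
      show PsiH R G e0 n hn (PhiH R G e0 n hn (Vq R (AH G e0 n) v)) = Vq R (AH G e0 n) v
      rw [PhiH_Vq, PsiH_Vq]
    | edge x =>
      show PsiH R G e0 n hn (PhiH R G e0 n hn (Eq' R (AH G e0 n) x)) = Eq' R (AH G e0 n) x
      rcases x with e | i
      · by_cases he : e = e0
        · rw [he, PhiH_Eq, Phi0_e0, PsiH_Pn]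
        · rw [PhiH_Eq, Phi0_inl R G e0 n he, PsiH_Eq, Psi0_inl]
      · have h2 : (Sum.inr i.castSucc : (EL G e0 n).E) = hidx G e0 n (i : ℕ) := by
          rw [← cs_eq G e0 n i.isLt]
        rw [PhiH_Eq, Phi0_inr, h2, PsiH_em R G e0 n hn i.isLt, aidx_eq G e0 n hn i.isLt]
    | ghost x =>
      show PsiH R G e0 n hn (PhiH R G e0 n hn (Gq R (AH G e0 n) x)) = Gq R (AH G e0 n) x
      rcases x with e | i
      · by_cases he : e = e0
        · rw [he, PhiH_Gq, Phi0_g_e0, PsiH_Pgn]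
        · rw [PhiH_Gq, Phi0_g_inl R G e0 n he, PsiH_Gq, Psi0_g_inl]
      · have h2 : (Sum.inr i.castSucc : (EL G e0 n).E) = hidx G e0 n (i : ℕ) := by
          rw [← cs_eq G e0 n i.isLt]
        rw [PhiH_Gq, Phi0_g_inr, h2, PsiH_gm R G e0 n hn i.isLt, aidx_eq G e0 n hn i.isLt]
  apply AlgHom.ext
  intro z
  obtain ⟨x, rfl⟩ := RingQuot.mkAlgHom_surjective R (LRel R (AH G e0 n)) z
  exact AlgHom.congr_fun h1 x

lemma phi_psi : (PhiH R G e0 n hn).comp (PsiH R G e0 n hn) =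
    AlgHom.id R (LPA R (EL G e0 n)) := by
  have h1 : ((PhiH R G e0 n hn).comp (PsiH R G e0 n hn)).comp
        (RingQuot.mkAlgHom R (LRel R (EL G e0 n))) =
      (AlgHom.id R (LPA R (EL G e0 n))).comp
        (RingQuot.mkAlgHom R (LRel R (EL G e0 n))) := by
    apply FreeAlgebra.hom_ext
    funext g
    simp only [Function.comp_apply, AlgHom.coe_comp, AlgHom.coe_id, id_eq]
    cases g with
    | vert v =>
      show PhiH R G e0 n hn (PsiH R G e0 n hn (Vq R (EL G e0 n) v)) = Vq R (EL G e0 n) v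
      rw [PsiH_Vq, PhiH_Vq]
    | edge x =>
      show PhiH R G e0 n hn (PsiH R G e0 n hn (Eq' R (EL G e0 n) x)) = Eq' R (EL G e0 n) x
      rcases x with e | j
      · rw [PsiH_Eq, Psi0_inl, PhiH_Eq, Phi0_inl R G e0 n e.2]
      · by_cases hj : (j : ℕ) = n
        · rw [PsiH_Eq, Psi0_top R G e0 n hn hj, PhiH_QE,
            show hidx G e0 n n = Sum.inr j from by
              rw [hidx_eq G e0 n le_rfl]; exact congrArg Sum.inr (Fin.ext hj.symm)]
        · have hj' : (j : ℕ) < n := lt_of_le_of_ne (Nat.lt_succ_iff.mp j.isLt) hj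
          rw [PsiH_Eq, Psi0_low R G e0 n hn hj',
            show (Sum.inr ⟨(j : ℕ), hj'⟩ : (AH G e0 n).E) = aidx G e0 n hn (j : ℕ) from
              (aidx_eq G e0 n hn hj').symm,
            PhiH_fm R G e0 n hn hj', hidx_eq G e0 n hj'.le,
            show (⟨(j : ℕ), Nat.lt_succ_of_le hj'.le⟩ : Fin (n+1)) = j from Fin.ext rfl]
    | ghost x =>
      show PhiH R G e0 n hn (PsiH R G e0 n hn (Gq R (EL G e0 n) x)) = Gq R (EL G e0 n) x
      rcases x with e | j
      · rw [PsiH_Gq, Psi0_g_inl, PhiH_Gq, Phi0_g_inl R G e0 n e.2]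
      · by_cases hj : (j : ℕ) = n
        · rw [PsiH_Gq, Psi0_g_top R G e0 n hn hj, PhiH_QG,
            show hidx G e0 n n = Sum.inr j from by
              rw [hidx_eq G e0 n le_rfl]; exact congrArg Sum.inr (Fin.ext hj.symm)]
        · have hj' : (j : ℕ) < n := lt_of_le_of_ne (Nat.lt_succ_iff.mp j.isLt) hj
          rw [PsiH_Gq, Psi0_g_low R G e0 n hn hj',
            show (Sum.inr ⟨(j : ℕ), hj'⟩ : (AH G e0 n).E) = aidx G e0 n hn (j : ℕ) from
              (aidx_eq G e0 n hn hj').symm,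
            PhiH_fgm R G e0 n hn hj', hidx_eq G e0 n hj'.le,
            show (⟨(j : ℕ), Nat.lt_succ_of_le hj'.le⟩ : Fin (n+1)) = j from Fin.ext rfl]
  apply AlgHom.ext
  intro z
  obtain ⟨x, rfl⟩ := RingQuot.mkAlgHom_surjective R (LRel R (EL G e0 n)) z
  exact AlgHom.congr_fun h1 x

def theEquiv : LPA R (AH G e0 n) ≃ₐ[R] LPA R (EL G e0 n) :=
  AlgEquiv.ofAlgHom (PhiH R G e0 n hn) (PsiH R G e0 n hn)
    (phi_psi R G e0 n hn) (psi_phi R G e0 n hn)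

end Helper

theorem stmt2 (R : Type) [CommRing R] (G : DGraph) (e0 : G.E) (n : ℕ) (hn : 0 < n) :
    Nonempty (LPA R (attachHead G (G.r e0) n) ≃ₐ[R] LPA R (elongate G e0 n)) := by
  exact ⟨Helper.theEquiv R G e0 n hn⟩
end
end

section
/- Let E be a directed graph and X ⊊ E^0 a finite subset. There exists a row-finite, path-finite directed forest T in E with T^r = X and T^0 = H_E(X) if and only if the hereditary closure H_E(X) of X is finite. -/
noncomputable section

open DGraph

/-- A directed forest in `G`: an acyclic subgraph in which each vertex receives at
most one edge. -/
structure Forest (G : DGraph) where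
  TV : Set G.V
  TE : Set G.E
  src_mem : ∀ e ∈ TE, G.s e ∈ TV
  rng_mem : ∀ e ∈ TE, G.r e ∈ TV
  atMostOne : ∀ e ∈ TE, ∀ f ∈ TE, G.r e = G.r f → e = f
  acyclic : ∀ (l : List G.E) (hl : l ≠ []), (∀ e ∈ l, e ∈ TE) →
    List.Chain' (fun e f => G.r e = G.s f) l → G.r (l.getLast hl) ≠ G.s (l.head hl)

/-- `T` is row-finite: each vertex emits finitely many `T`-edges. -/
def Forest.RowFinite {G : DGraph} (T : Forest G) : Prop :=
  ∀ v : G.V, {e | e ∈ T.TE ∧ G.s e = v}.Finite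

/-- `T` is path-finite: it admits no vertex-simple (right-, left-, or bi-)infinite
path. -/
def Forest.PathFinite {G : DGraph} (T : Forest G) : Prop :=
  (¬ ∃ f : ℕ → G.E, (∀ n, f n ∈ T.TE) ∧ (∀ n, G.r (f n) = G.s (f (n + 1))) ∧
      Function.Injective fun n => G.s (f n)) ∧
  (¬ ∃ f : ℕ → G.E, (∀ n, f n ∈ T.TE) ∧ (∀ n, G.r (f (n + 1)) = G.s (f n)) ∧
      Function.Injective fun n => G.s (f n))

/-- `T^r`: the roots of the forest, i.e. the vertices of `T` receiving no `T`-edge. -/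
def Forest.roots {G : DGraph} (T : Forest G) : Set G.V :=
  {v | v ∈ T.TV ∧ ∀ e ∈ T.TE, G.r e ≠ v}

section Aux

variable {G : DGraph}

/-- Indexed version of acyclicity. -/
lemma Forest.acyclic_fun (T : Forest G) (f : ℕ → G.E) (m : ℕ)
    (hmem : ∀ k ≤ m, f k ∈ T.TE) (hch : ∀ k < m, G.r (f k) = G.s (f (k + 1))) :
    G.r (f m) ≠ G.s (f 0) := by
  have hne : List.ofFn (fun i : Fin (m + 1) => f i) ≠ [] := by
    simp [List.ofFn_eq_nil_iff]
  have h := T.acyclic (List.ofFn (fun i : Fin (m + 1) => f i)) hne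
    (by
      intro e he
      rw [List.mem_ofFn] at he
      obtain ⟨i, rfl⟩ := he
      exact hmem i (Nat.lt_succ_iff.mp i.isLt))
    (by
      rw [List.Chain', List.isChain_iff_getElem]
      intro i hi
      simp only [List.length_ofFn] at hi
      simp only [List.getElem_ofFn]
      exact hch i (by omega))
  rwa [List.getLast_ofFn, List.head_ofFn] at h

lemma Forest.no_forward_chain (T : Forest G) (hPF : T.PathFinite) (f : ℕ → G.E)
    (hmem : ∀ n, f n ∈ T.TE) (hch : ∀ n, G.r (f n) = G.s (f (n + 1))) : False := by
  refine hPF.1 ⟨f, hmem, hch, ?_⟩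
  intro n m h
  simp only at h
  by_contra hne
  wlog hlt : n < m generalizing n m
  · exact this h.symm (Ne.symm hne) (by omega)
  have key := T.acyclic_fun (fun k => f (n + k)) (m - 1 - n)
    (fun k _ => hmem _)
    (fun k _ => by
      have h1 : n + (k + 1) = n + k + 1 := by omega
      rw [h1]
      exact hch _)
  apply key
  simp only [Nat.add_zero]
  have h1 : n + (m - 1 - n) = m - 1 := by omega
  have h2 : m - 1 + 1 = m := by omega
  rw [h1]
  calc G.r (f (m - 1)) = G.s (f (m - 1 + 1)) := hch _
    _ = G.s (f m) := by rw [h2]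
    _ = G.s (f n) := h.symm

lemma Forest.no_backward_chain (T : Forest G) (hPF : T.PathFinite) (f : ℕ → G.E)
    (hmem : ∀ n, f n ∈ T.TE) (hch : ∀ n, G.r (f (n + 1)) = G.s (f n)) : False := by
  refine hPF.2 ⟨f, hmem, hch, ?_⟩
  intro n m h
  simp only at h
  by_contra hne
  wlog hlt : n < m generalizing n m
  · exact this h.symm (Ne.symm hne) (by omega)
  have key := T.acyclic_fun (fun k => f (m - k)) (m - 1 - n)
    (fun k _ => hmem _)
    (fun k hk => by
      have h1 : m - k = m - (k + 1) + 1 := by omega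
      rw [h1]
      exact hch _)
  apply key
  simp only [Nat.sub_zero]
  have h1 : m - (m - 1 - n) = n + 1 := by omega
  rw [h1]
  calc G.r (f (n + 1)) = G.s (f n) := hch n
    _ = G.s (f m) := h

/-- One step inside the forest. -/
def StepT (T : Forest G) (u w : G.V) : Prop := ∃ e ∈ T.TE, G.s e = u ∧ G.r e = w

/-- Descendants of a vertex inside the forest. -/
def DescT (T : Forest G) (u : G.V) : Set G.V := {v | Relation.ReflTransGen (StepT T) u v}

/-- Reachability in exactly `n` steps. -/
def reachN (G : DGraph) : ℕ → G.V → G.V → Prop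
  | 0, v, w => v = w
  | n + 1, v, w => ∃ u, reachN G n v u ∧ Step G u w

lemma reaches_iff_reachN {v w : G.V} : Reaches G v w ↔ ∃ n, reachN G n v w := by
  constructor
  · intro h
    induction h with
    | refl => exact ⟨0, rfl⟩
    | tail _ hbc ih =>
      obtain ⟨n, hn⟩ := ih
      exact ⟨n + 1, _, hn, hbc⟩
  · rintro ⟨n, hn⟩
    induction n generalizing w with
    | zero => exact hn ▸ Relation.ReflTransGen.refl
    | succ n ih =>
      obtain ⟨u, h1, h2⟩ := hn
      exact (ih h1).tail h2

end Aux

theorem stmt7 (G : DGraph) (X : Set G.V) (hXfin : X.Finite) (hXne : X ≠ Set.univ) :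
    (∃ T : Forest G, T.RowFinite ∧ T.PathFinite ∧ T.roots = X ∧ T.TV = HClosure G X) ↔
      (HClosure G X).Finite := by
  classical
  constructor
  · rintro ⟨T, hRF, hPF, hroots, hTV⟩
    rw [← hTV]
    -- Claim A : every vertex of T.TV is a descendant of a root.
    have claimA : ∀ v ∈ T.TV, ∃ u ∈ T.roots, v ∈ DescT T u := by
      by_contra hA
      push_neg at hA
      obtain ⟨v0, hv0TV, hv0⟩ := hA
      set S : Set G.V := {v | v ∈ T.TV ∧ ∀ u ∈ T.roots, v ∉ DescT T u} with hS
      have hv0S : v0 ∈ S := ⟨hv0TV, hv0⟩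
      have hstep : ∀ v : ↥S, ∃ e, e ∈ T.TE ∧ G.r e = (v : G.V) ∧ G.s e ∈ S := by
        rintro ⟨v, hvTV, hv⟩
        have hvroot : v ∉ T.roots := fun h => hv v h Relation.ReflTransGen.refl
        have : ∃ e ∈ T.TE, G.r e = v := by
          by_contra h
          push_neg at h
          exact hvroot ⟨hvTV, h⟩
        obtain ⟨e, he, hre⟩ := this
        refine ⟨e, he, hre, T.src_mem e he, ?_⟩
        intro u hu hdesc
        exact hv u hu (hdesc.tail ⟨e, he, rfl, hre⟩)
      choose ed hed1 hed2 hed3 using hstep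
      let next : ↥S → ↥S := fun v => ⟨G.s (ed v), hed3 v⟩
      let seq : ℕ → ↥S := fun n => next^[n] ⟨v0, hv0S⟩
      have hseq : ∀ n, seq (n + 1) = next (seq n) := fun n =>
        Function.iterate_succ_apply' next n _
      exact T.no_backward_chain hPF (fun n => ed (seq n)) (fun n => hed1 _)
        (fun n => by
          rw [hed2 (seq (n + 1)), hseq n])
    -- Claim B : descendants of any vertex of T.TV form a finite set.
    have claimB : ∀ u ∈ T.TV, (DescT T u).Finite := by
      by_contra hB
      push_neg at hB
      obtain ⟨u0, hu0TV, hu0⟩ := hB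
      have hstep : ∀ v : {v : G.V // v ∈ T.TV ∧ (DescT T v).Infinite},
          ∃ e, e ∈ T.TE ∧ G.s e = (v : G.V) ∧
            (G.r e ∈ T.TV ∧ (DescT T (G.r e)).Infinite) := by
        rintro ⟨v, hvTV, hv⟩
        by_contra h
        push_neg at h
        apply hv
        have hsub : DescT T v ⊆ {v} ∪ ⋃ e ∈ {e | e ∈ T.TE ∧ G.s e = v}, DescT T (G.r e) := by
          intro w hw
          rcases Relation.ReflTransGen.cases_head hw with rfl | ⟨c, ⟨e, he, hse, hre⟩, hc⟩
          · exact Or.inl rfl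
          · exact Or.inr (Set.mem_biUnion ⟨he, hse⟩ (hre ▸ hc))
        refine Set.Finite.subset (Set.Finite.union (Set.finite_singleton v) ?_) hsub
        refine Set.Finite.biUnion (hRF v) ?_
        rintro e ⟨he, hse⟩
        by_contra hinf
        exact hinf (h e he hse (T.rng_mem e he))
      choose ed hed1 hed2 hed3 using hstep
      let next : {v : G.V // v ∈ T.TV ∧ (DescT T v).Infinite} →
          {v : G.V // v ∈ T.TV ∧ (DescT T v).Infinite} := fun v => ⟨G.r (ed v), hed3 v⟩
      let seq : ℕ → {v : G.V // v ∈ T.TV ∧ (DescT T v).Infinite} :=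
        fun n => next^[n] ⟨u0, hu0TV, hu0⟩
      have hseq : ∀ n, seq (n + 1) = next (seq n) := fun n =>
        Function.iterate_succ_apply' next n _
      exact T.no_forward_chain hPF (fun n => ed (seq n)) (fun n => hed1 _)
        (fun n => by
          rw [hed2 (seq (n + 1)), hseq n])
    -- conclude
    have hsub : T.TV ⊆ ⋃ u ∈ X, DescT T u := by
      intro v hv
      obtain ⟨u, hu, hdesc⟩ := claimA v hv
      exact Set.mem_biUnion (hroots ▸ hu) hdesc
    refine Set.Finite.subset (Set.Finite.biUnion hXfin ?_) hsub
    intro u hu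
    have : u ∈ T.roots := hroots ▸ hu
    exact claimB u this.1
  · intro hHfin
    set H := HClosure G X with hH
    have hXH : X ⊆ H := fun v hv => ⟨v, hv, Relation.ReflTransGen.refl⟩
    set d : G.V → ℕ := fun w => sInf {n | ∃ v ∈ X, reachN G n v w} with hd
    have hdmem : ∀ w ∈ H, ∃ v ∈ X, reachN G (d w) v w := by
      intro w hw
      obtain ⟨v, hv, hr⟩ := hw
      obtain ⟨n, hn⟩ := reaches_iff_reachN.mp hr
      have := Nat.sInf_mem (s := {n | ∃ v ∈ X, reachN G n v w}) ⟨n, v, hv, hn⟩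
      exact this
    have hedge : ∀ w ∈ H, w ∉ X → ∃ e, G.r e = w ∧ G.s e ∈ H ∧ d (G.s e) < d w := by
      intro w hw hwX
      obtain ⟨v, hv, hr⟩ := hdmem w hw
      cases hdw : d w with
      | zero =>
        rw [hdw] at hr
        exact absurd (hr ▸ hv) hwX
      | succ n =>
        rw [hdw] at hr
        obtain ⟨u, hu, e, hse, hre⟩ := hr
        refine ⟨e, hre, ?_, ?_⟩
        · exact hse ▸ ⟨v, hv, reaches_iff_reachN.mpr ⟨n, hu⟩⟩
        · rw [hse]
          exact Nat.lt_succ_of_le (Nat.sInf_le ⟨v, hv, hu⟩)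
    have hpick : ∀ w : ↥(H \ X), ∃ e, G.r e = (w : G.V) ∧ G.s e ∈ H ∧ d (G.s e) < d w :=
      fun w => hedge w w.2.1 w.2.2
    choose pick hp1 hp2 hp3 using hpick
    set TE : Set G.E := Set.range pick with hTE
    have hTEfin : TE.Finite := by
      have : Finite ↥(H \ X) := (hHfin.subset Set.diff_subset).to_subtype
      exact Set.finite_range pick
    have hTEprop : ∀ e ∈ TE, G.r e ∈ H \ X ∧ G.s e ∈ H ∧ d (G.s e) < d (G.r e) := by
      rintro e ⟨w, rfl⟩
      exact ⟨hp1 w ▸ w.2, hp2 w, (hp1 w).symm ▸ hp3 w⟩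
    refine ⟨⟨H, TE, fun e he => (hTEprop e he).2.1, fun e he => (hTEprop e he).1.1, ?_, ?_⟩,
      ?_, ?_, ?_, rfl⟩
    · -- atMostOne
      rintro e ⟨w, rfl⟩ f ⟨w', rfl⟩ hrr
      have : w = w' := Subtype.ext (by rw [← hp1 w, ← hp1 w', hrr])
      rw [this]
    · -- acyclic
      have key : ∀ l : List G.E, ∀ hl : l ≠ [], (∀ e ∈ l, e ∈ TE) →
          List.Chain' (fun e f => G.r e = G.s f) l →
          d (G.s (l.head hl)) < d (G.r (l.getLast hl)) := by
        intro l
        induction l with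
        | nil => simp
        | cons e l ih =>
          intro hl hmem hch
          cases l with
          | nil => simpa using (hTEprop e (hmem e (by simp))).2.2
          | cons f l' =>
            have h1 : G.r e = G.s f := (List.isChain_cons_cons.mp hch).1
            have h2 := ih (by simp) (fun x hx => hmem x (List.mem_cons_of_mem e hx))
              (List.isChain_cons_cons.mp hch).2
            rw [List.head_cons, List.getLast_cons (by simp)]
            calc d (G.s e) < d (G.r e) := (hTEprop e (hmem e (by simp))).2.2
              _ = d (G.s ((f :: l').head (by simp))) := by rw [h1, List.head_cons]
              _ < d (G.r ((f :: l').getLast (by simp))) := h2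
      intro l hl hmem hch heq
      have := key l hl hmem hch
      rw [heq] at this
      exact lt_irrefl _ this
    · -- RowFinite
      intro v
      exact hTEfin.subset (fun e he => he.1)
    · -- PathFinite
      constructor <;>
      · rintro ⟨f, hmem, _, hinj⟩
        have hfinj : Function.Injective f := fun a b hab => hinj (congrArg G.s hab)
        exact (Set.infinite_of_injective_forall_mem hfinj hmem) hTEfin
    · -- roots = X
      ext v
      constructor
      · rintro ⟨hvH, hnoin⟩
        by_contra hvX
        have hv : v ∈ H \ X := ⟨hvH, hvX⟩
        exact hnoin (pick ⟨v, hv⟩) ⟨⟨v, hv⟩, rfl⟩ (hp1 ⟨v, hv⟩)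
      · intro hvX
        refine ⟨hXH hvX, ?_⟩
        rintro e ⟨w, rfl⟩ hre
        have hwv : (w : G.V) = v := by rw [← hp1 w, hre]
        exact w.2.2 (hwv ▸ hvX)
end
end

section
/- Let E be a finite directed graph with no sinks and no sources, X ⊊ E^0, and T a directed forest in E with T^r = X and T^0 = H_E(X). Then the T-corner graph E(T) is a finite graph with no sinks. -/
noncomputable section

open DGraph

/-- Vertices of the `T`-corner graph `E(T)`. -/
def ETV {G : DGraph} (T : Forest G) : Set G.V :=
  {v | v ∈ T.TV ∧ ¬({e : G.E | G.s e = v}.Nonempty ∧ ∀ e : G.E, G.s e = v → e ∈ T.TE)}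

/-- `≥_T`: reachability by a path lying in the forest `T`. -/
def ReachesT {G : DGraph} (T : Forest G) : G.V → G.V → Prop :=
  Relation.ReflTransGen fun v w => ∃ e ∈ T.TE, G.s e = v ∧ G.r e = w

/-- The `T`-corner graph `E(T)` (Crisp, Definition 3.1). -/
def cornerGraph {G : DGraph} (T : Forest G) : DGraph where
  V := {v : G.V // v ∈ ETV T}
  E := {p : G.E × G.V // p.1 ∉ T.TE ∧ G.s p.1 ∈ T.TV ∧ p.2 ∈ ETV T ∧
    ReachesT T (G.r p.1) p.2}
  s := fun p => ⟨G.s p.1.1, p.2.2.1, fun h => p.2.1 (h.2 p.1.1 rfl)⟩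
  r := fun p => ⟨p.1.2, p.2.2.2.1⟩

lemma reach_list {G : DGraph} (T : Forest G) {a b : G.V} (h : ReachesT T a b) :
    a = b ∨ ∃ l : List G.E, ∃ hl : l ≠ [], (∀ e ∈ l, e ∈ T.TE) ∧
      List.Chain' (fun e f => G.r e = G.s f) l ∧ G.s (l.head hl) = a ∧
      G.r (l.getLast hl) = b := by
  induction h with
  | refl => exact Or.inl rfl
  | tail hab step ih =>
    obtain ⟨e, heT, hse, hre⟩ := step
    rcases ih with rfl | ⟨l, hl, hmem, hchain, hhead, hlast⟩
    · refine Or.inr ⟨[e], by simp, by simpa using heT, List.isChain_singleton _, by simpa using hse,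
        by simpa using hre⟩
    · refine Or.inr ⟨l ++ [e], by simp, ?_, ?_, ?_, ?_⟩
      · intro f hf
        rcases List.mem_append.1 hf with hf | hf
        · exact hmem f hf
        · simp at hf; subst hf; exact heT
      · show List.IsChain _ _
        rw [List.isChain_append]
        refine ⟨hchain, List.isChain_singleton _, ?_⟩
        intro x hx y hy
        simp at hy; subst hy
        rw [List.getLast?_eq_getLast hl] at hx
        simp at hx; subst hx
        rw [hlast, hse]
      · rw [List.head_append_of_ne_nil hl]; exact hhead
      · rw [List.getLast_append]; exact hre

lemma no_cycle {G : DGraph} (T : Forest G) {e : G.E} {w : G.V} (heT : e ∈ T.TE)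
    (hse : G.s e = w) (h : ReachesT T (G.r e) w) : False := by
  rcases reach_list T h with heq | ⟨l, hl, hmem, hchain, hhead, hlast⟩
  · exact T.acyclic [e] (by simp) (by simpa using heT) (List.isChain_singleton _)
      (by simp [heq, hse])
  · refine T.acyclic (e :: l) (by simp) ?_ ?_ ?_
    · intro f hf
      rcases List.mem_cons.1 hf with rfl | hf
      · exact heT
      · exact hmem f hf
    · show List.IsChain _ _
      rw [List.isChain_cons]
      refine ⟨?_, hchain⟩
      intro y hy
      rw [List.head?_eq_head hl] at hy
      simp at hy; subst hy; exact hhead.symm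
    · rw [List.getLast_cons hl]
      simp [hlast, hse]

lemma exit_lemma {G : DGraph} (T : Forest G) [Finite G.V] (hns : NoSinks G) :
    ∀ w ∈ T.TV, ∃ u ∈ ETV T, ReachesT T w u := by
  intro w hw
  generalize hn : ({u | ReachesT T w u}).ncard = n
  induction n using Nat.strong_induction_on generalizing w with
  | _ n ih =>
    by_cases hwe : w ∈ ETV T
    · exact ⟨w, hwe, Relation.ReflTransGen.refl⟩
    · have hcond : {e : G.E | G.s e = w}.Nonempty ∧ ∀ e : G.E, G.s e = w → e ∈ T.TE := by
        by_contra hc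
        exact hwe ⟨hw, hc⟩
      obtain ⟨f, hsf⟩ := hns w
      have hfT : f ∈ T.TE := hcond.2 f hsf
      have hw' : G.r f ∈ T.TV := T.rng_mem f hfT
      have hstep : ReachesT T w (G.r f) :=
        Relation.ReflTransGen.single ⟨f, hfT, hsf, rfl⟩
      have hss : {u | ReachesT T (G.r f) u} ⊂ {u | ReachesT T w u} := by
        constructor
        · intro u hu
          exact hstep.trans hu
        · intro hsub
          exact no_cycle T hfT hsf (hsub (Relation.ReflTransGen.refl))
      have hlt : ({u | ReachesT T (G.r f) u}).ncard < n := by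
        rw [← hn]
        exact Set.ncard_lt_ncard hss (Set.toFinite _)
      obtain ⟨u, hu, hru⟩ := ih _ hlt (G.r f) hw' rfl
      exact ⟨u, hu, hstep.trans hru⟩

theorem stmt9 (G : DGraph) (hfin : FiniteGraph G) (hns : NoSinks G) (hnso : NoSources G)
    (X : Set G.V) (hXne : X ≠ Set.univ) (T : Forest G)
    (hroots : T.roots = X) (hTV : T.TV = HClosure G X) :
    FiniteGraph (cornerGraph T) ∧ NoSinks (cornerGraph T) := by
  have hVfin : Finite G.V := hfin.1
  have hEfin : Finite G.E := hfin.2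
  refine ⟨⟨Subtype.finite, Subtype.finite⟩, ?_⟩
  rintro ⟨w, hw⟩
  have hwT : w ∈ T.TV := hw.1
  have hex : ∃ e : G.E, G.s e = w ∧ e ∉ T.TE := by
    by_contra hc
    push_neg at hc
    exact hw.2 ⟨hns w, fun e he => hc e he⟩
  obtain ⟨e, hse, heT⟩ := hex
  have hre : G.r e ∈ T.TV := by
    rw [hTV] at hwT ⊢
    obtain ⟨v, hv, hreach⟩ := hwT
    exact ⟨v, hv, hreach.tail ⟨e, hse, rfl⟩⟩
  obtain ⟨u, hu, hreach⟩ := exit_lemma T hns (G.r e) hre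
  refine ⟨⟨(e, u), heT, hse ▸ hwT, hu, hreach⟩, ?_⟩
  exact Subtype.ext hse
end
end
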